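/- arXiv:1404.6839 — 5 statements merged into one kernel-verified Lean document; each statement's English description precedes it below -/
import Mathlib

section
/- Let m, n ≥ 2 be integers. For every α ∈ ℝ, the blockwise map φ_α^{[m]} does not preserve positivity on 𝒫^{[m]}_{mn}(ℝ): there exists an mn×mn Hermitian positive semidefinite block matrix H = (H_st)_{s,t=1}^n whose m×m blocks H_st are diagonalizable with real spectrum, such that (φ_α(H_st))_{s,t=1}^n is not positive semidefinite. -/
open scoped Classical ComplexOrder

/-- The `mn × mn` block matrix whose `(s,t)` block is the `m × m` matrix `H s t`. -/
def blockM {m n : ℕ} (H : Fin n → Fin n → Matrix (Fin m) (Fin m) ℂ) :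
    Matrix (Fin n × Fin m) (Fin n × Fin m) ℂ :=
  Matrix.of fun p q => H p.1 q.1 p.2 q.2

/-- `f_α(x) := x^α` for `x ≠ 0`, with the convention `f_α(0) := 0`. -/
noncomputable def fPow (α : ℝ) (x : ℝ) : ℝ := if x = 0 then 0 else x ^ α

/-- `φ_α(x) := |x|^α` for `x ≠ 0`, with `φ_α(0) := 0`. -/
noncomputable def phiPow (α : ℝ) (x : ℝ) : ℝ := if x = 0 then 0 else |x| ^ α

/-- `ψ_α(x) := sgn(x)|x|^α` for `x ≠ 0`, with `ψ_α(0) := 0`. -/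
noncomputable def psiPow (α : ℝ) (x : ℝ) : ℝ := if x = 0 then 0 else Real.sign x * |x| ^ α

/-- Apply a function `f : ℝ → ℂ` to a Hermitian matrix via its spectral decomposition
(junk value `0` on non-Hermitian input). -/
noncomputable def hermFun {m : ℕ} (f : ℝ → ℂ) (B : Matrix (Fin m) (Fin m) ℂ) :
    Matrix (Fin m) (Fin m) ℂ :=
  if hB : B.IsHermitian then
    (hB.eigenvectorUnitary : Matrix (Fin m) (Fin m) ℂ) *
      Matrix.diagonal (fun i => f (hB.eigenvalues i)) *
      (star (hB.eigenvectorUnitary : Matrix (Fin m) (Fin m) ℂ))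
  else 0

/-- `B^α` for a Hermitian matrix `B`, computed via the spectral decomposition of `B`,
with the convention `0^α := 0` on the spectrum. -/
noncomputable def hermPow {m : ℕ} (α : ℝ) (B : Matrix (Fin m) (Fin m) ℂ) :
    Matrix (Fin m) (Fin m) ℂ :=
  hermFun (fun x => ((fPow α x : ℝ) : ℂ)) B

/-- The power function `Ψ_{α,β}` on `ℂ`: `Ψ_{α,β}(r e^{iθ}) := r^α e^{iβθ}` for `r > 0`,
`θ ∈ (-π, π]`, and `Ψ_{α,β}(0) := 0`. -/
noncomputable def Psi (α β : ℝ) (z : ℂ) : ℂ :=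
  if z = 0 then 0
  else ((‖z‖ ^ α : ℝ) : ℂ) * Complex.exp (((β * z.arg : ℝ) : ℂ) * Complex.I)

/-- The 3×3 Hermitian matrix `T(t, θ)` with unit diagonal and off-diagonal entries
`T₁₂ = t₃`, `T₁₃ = t₂ e^{iθ}`, `T₂₃ = t₁`. -/
noncomputable def T3 (t1 t2 t3 θ : ℝ) : Matrix (Fin 3) (Fin 3) ℂ :=
  !![1, (t3 : ℂ), (t2 : ℂ) * Complex.exp ((θ : ℂ) * Complex.I);
     (t3 : ℂ), 1, (t1 : ℂ);
     (t2 : ℂ) * Complex.exp (-(θ : ℂ) * Complex.I), (t1 : ℂ), 1]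

open Matrix

namespace CEX
variable {m n : ℕ}

/-- `2×2` matrix padded by the identity into an `m×m` matrix. -/
def padM (m : ℕ) (M : Matrix (Fin 2) (Fin 2) ℂ) : Matrix (Fin m) (Fin m) ℂ :=
  Matrix.of fun i j =>
    if h : i.1 < 2 ∧ j.1 < 2 then M ⟨i.1, h.1⟩ ⟨j.1, h.2⟩ else if i = j then 1 else 0

/-- `2×2` matrix padded by zero into an `m×m` matrix. -/
def embM (m : ℕ) (M : Matrix (Fin 2) (Fin 2) ℂ) : Matrix (Fin m) (Fin m) ℂ :=
  Matrix.of fun i j =>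
    if h : i.1 < 2 ∧ j.1 < 2 then M ⟨i.1, h.1⟩ ⟨j.1, h.2⟩ else 0

/-- vector padded by zero. -/
def padd (m : ℕ) (d : Fin 2 → ℝ) : Fin m → ℝ :=
  fun i => if h : i.1 < 2 then d ⟨i.1, h⟩ else 0

lemma sum_two (hm : 2 ≤ m) (g : Fin m → ℂ) (hg : ∀ k : Fin m, ¬ k.1 < 2 → g k = 0) :
    ∑ k, g k = g ⟨0, by omega⟩ + g ⟨1, by omega⟩ := by
  rw [← Finset.sum_subset (Finset.subset_univ {(⟨0, by omega⟩ : Fin m), ⟨1, by omega⟩})]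
  · rw [Finset.sum_pair (by simp [Fin.ext_iff])]
  · intro k _ hk
    apply hg
    simp only [Finset.mem_insert, Finset.mem_singleton, Fin.ext_iff] at hk
    omega

lemma padM_one : padM m 1 = 1 := by
  ext i j
  simp only [padM, Matrix.of_apply, Matrix.one_apply, Fin.ext_iff]
  split_ifs with h h1 h2 h3 <;> simp_all <;> omega

lemma padM_mul (hm : 2 ≤ m) (M N : Matrix (Fin 2) (Fin 2) ℂ) :
    padM m M * padM m N = padM m (M * N) := by
  ext i j
  rw [Matrix.mul_apply]
  by_cases hi : i.1 < 2
  · by_cases hj : j.1 < 2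
    · rw [sum_two hm]
      · simp only [padM, Matrix.of_apply, Matrix.mul_apply, Fin.sum_univ_two]
        norm_num [hi, hj]
      · intro k hk
        simp only [padM, Matrix.of_apply]
        rw [dif_neg (by omega), if_neg (by simp [Fin.ext_iff]; omega), zero_mul]
    · have : ∀ k : Fin m, padM m M i k * padM m N k j = 0 := by
        intro k
        by_cases hk : k.1 < 2
        · simp only [padM, Matrix.of_apply]
          rw [dif_pos ⟨hi, hk⟩, dif_neg (by omega), if_neg (by simp [Fin.ext_iff]; omega), mul_zero]
        · simp only [padM, Matrix.of_apply]
          rw [dif_neg (by omega), if_neg (by simp [Fin.ext_iff]; omega), zero_mul]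
      rw [Finset.sum_eq_zero fun k _ => this k]
      simp only [padM, Matrix.of_apply]
      rw [dif_neg (by omega), if_neg (by simp [Fin.ext_iff]; omega)]
  · rw [Finset.sum_eq_single i]
    · have h1 : padM m M i i = 1 := by
        simp only [padM, Matrix.of_apply]
        rw [dif_neg (by omega)]
        simp
      rw [h1, one_mul]
      simp only [padM, Matrix.of_apply]
      rw [dif_neg (by omega), dif_neg (by omega)]
    · intro k _ hk
      have : padM m M i k = 0 := by
        simp only [padM, Matrix.of_apply]
        rw [dif_neg (by omega), if_neg (by simp [Fin.ext_iff] at hk ⊢; omega)]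
      rw [this, zero_mul]
    · intro h; exact absurd (Finset.mem_univ i) h


lemma padM_mul_embM (hm : 2 ≤ m) (M N : Matrix (Fin 2) (Fin 2) ℂ) :
    padM m M * embM m N = embM m (M * N) := by
  ext i j
  rw [Matrix.mul_apply]
  by_cases hi : i.1 < 2
  · by_cases hj : j.1 < 2
    · rw [sum_two hm]
      · simp only [padM, embM, Matrix.of_apply, Matrix.mul_apply, Fin.sum_univ_two]
        norm_num [hi, hj]
      · intro k hk
        simp only [padM, embM, Matrix.of_apply]
        rw [dif_neg (by omega), if_neg (by simp [Fin.ext_iff]; omega), zero_mul]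
    · have : ∀ k : Fin m, padM m M i k * embM m N k j = 0 := fun k =>
        mul_eq_zero_of_right _ (by simp only [embM, Matrix.of_apply]; rw [dif_neg (by omega)])
      rw [Finset.sum_eq_zero fun k _ => this k]
      simp only [embM, Matrix.of_apply]
      rw [dif_neg (by omega)]
  · have : ∀ k : Fin m, padM m M i k * embM m N k j = 0 := by
      intro k
      by_cases hk : k.1 < 2
      · refine mul_eq_zero_of_left ?_ _
        simp only [padM, Matrix.of_apply]
        rw [dif_neg (by omega), if_neg (by simp [Fin.ext_iff]; omega)]
      · exact mul_eq_zero_of_right _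
          (by simp only [embM, Matrix.of_apply]; rw [dif_neg fun h => hk h.1])
    rw [Finset.sum_eq_zero fun k _ => this k]
    simp only [embM, Matrix.of_apply]
    rw [dif_neg (by omega)]

lemma embM_mul_padM (hm : 2 ≤ m) (M N : Matrix (Fin 2) (Fin 2) ℂ) :
    embM m M * padM m N = embM m (M * N) := by
  ext i j
  rw [Matrix.mul_apply]
  by_cases hi : i.1 < 2
  · by_cases hj : j.1 < 2
    · rw [sum_two hm]
      · simp only [padM, embM, Matrix.of_apply, Matrix.mul_apply, Fin.sum_univ_two]
        norm_num [hi, hj]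
      · intro k hk
        simp only [embM, Matrix.of_apply]
        rw [dif_neg (by omega), zero_mul]
    · have : ∀ k : Fin m, embM m M i k * padM m N k j = 0 := by
        intro k
        by_cases hk : k.1 < 2
        · refine mul_eq_zero_of_right _ ?_
          simp only [padM, Matrix.of_apply]
          rw [dif_neg (by omega), if_neg (by simp [Fin.ext_iff]; omega)]
        · exact mul_eq_zero_of_left
            (by simp only [embM, Matrix.of_apply]; rw [dif_neg fun h => hk h.2]) _
      rw [Finset.sum_eq_zero fun k _ => this k]
      simp only [embM, Matrix.of_apply]
      rw [dif_neg (by omega)]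
  · have : ∀ k : Fin m, embM m M i k * padM m N k j = 0 := fun k =>
      mul_eq_zero_of_left (by simp only [embM, Matrix.of_apply]; rw [dif_neg (by omega)]) _
    rw [Finset.sum_eq_zero fun k _ => this k]
    simp only [embM, Matrix.of_apply]
    rw [dif_neg (by omega)]

lemma diagonal_padd (d : Fin 2 → ℝ) :
    Matrix.diagonal (fun i => ((padd m d i : ℝ) : ℂ)) =
      embM m (Matrix.diagonal (fun i => ((d i : ℝ) : ℂ))) := by
  ext i j
  simp only [Matrix.diagonal_apply, embM, Matrix.of_apply, padd]
  by_cases hij : i = j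
  · subst hij
    by_cases hi : i.1 < 2
    · rw [if_pos rfl, dif_pos hi, dif_pos ⟨hi, hi⟩, if_pos rfl]
    · rw [if_pos rfl, dif_neg hi, dif_neg (by omega)]
      simp
  · rw [if_neg hij]
    by_cases h : i.1 < 2 ∧ j.1 < 2
    · rw [dif_pos h, if_neg (by simp [Fin.ext_iff] at hij ⊢; omega)]
    · rw [dif_neg h]


/-- pad a `2×2` table of `2×2` blocks into an `n×n` table of `m×m` blocks by zero. -/
def bigG (n m : ℕ) (G : Fin 2 → Fin 2 → Matrix (Fin 2) (Fin 2) ℂ) :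
    Fin n → Fin n → Matrix (Fin m) (Fin m) ℂ :=
  fun s t => if h : s.1 < 2 ∧ t.1 < 2 then embM m (G ⟨s.1, h.1⟩ ⟨t.1, h.2⟩) else 0

/-- extend a `2 × (2×2)` matrix to `2 × (n×m)` by zero columns. -/
def extW (n m : ℕ) (W : Matrix (Fin 2) (Fin 2 × Fin 2) ℂ) :
    Matrix (Fin 2) (Fin n × Fin m) ℂ :=
  Matrix.of fun r p =>
    if h : p.1.1 < 2 ∧ p.2.1 < 2 then W r (⟨p.1.1, h.1⟩, ⟨p.2.1, h.2⟩) else 0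

/-- extend a vector on `(2×2)` to `(n×m)` by zero. -/
def extv (n m : ℕ) (v : Fin 2 × Fin 2 → ℂ) : Fin n × Fin m → ℂ :=
  fun p => if h : p.1.1 < 2 ∧ p.2.1 < 2 then v (⟨p.1.1, h.1⟩, ⟨p.2.1, h.2⟩) else 0

lemma blockM_bigG_apply (hn : 2 ≤ n) (hm : 2 ≤ m)
    (G : Fin 2 → Fin 2 → Matrix (Fin 2) (Fin 2) ℂ) (p q : Fin n × Fin m) :
    blockM (bigG n m G) p q =
      if h : (p.1.1 < 2 ∧ p.2.1 < 2) ∧ (q.1.1 < 2 ∧ q.2.1 < 2) then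
        blockM G (⟨p.1.1, h.1.1⟩, ⟨p.2.1, h.1.2⟩) (⟨q.1.1, h.2.1⟩, ⟨q.2.1, h.2.2⟩)
      else 0 := by
  simp only [blockM, Matrix.of_apply, bigG]
  by_cases h1 : p.1.1 < 2 ∧ q.1.1 < 2
  · rw [dif_pos h1]
    simp only [embM, Matrix.of_apply]
    by_cases h2 : p.2.1 < 2 ∧ q.2.1 < 2
    · rw [dif_pos h2, dif_pos ⟨⟨h1.1, h2.1⟩, h1.2, h2.2⟩]
    · rw [dif_neg h2, dif_neg (by tauto)]
  · rw [dif_neg h1, dif_neg (by tauto)]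
    simp

lemma blockM_bigG_gram (hn : 2 ≤ n) (hm : 2 ≤ m)
    (G : Fin 2 → Fin 2 → Matrix (Fin 2) (Fin 2) ℂ)
    (W : Matrix (Fin 2) (Fin 2 × Fin 2) ℂ)
    (hW : blockM G = Wᴴ * W) :
    blockM (bigG n m G) = (extW n m W)ᴴ * extW n m W := by
  ext p q
  rw [blockM_bigG_apply hn hm, Matrix.mul_apply]
  simp only [Matrix.conjTranspose_apply, extW, Matrix.of_apply, Fin.sum_univ_two]
  by_cases h : (p.1.1 < 2 ∧ p.2.1 < 2) ∧ (q.1.1 < 2 ∧ q.2.1 < 2)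
  · rw [dif_pos h, hW, Matrix.mul_apply]
    simp only [Matrix.conjTranspose_apply, Fin.sum_univ_two, dif_pos h.1, dif_pos h.2]
  · rw [dif_neg h]
    rcases not_and_or.mp h with h1 | h1
    · simp only [dif_neg h1]
      simp
    · simp only [dif_neg h1]
      simp

lemma sum_corner (hn : 2 ≤ n) (hm : 2 ≤ m) (g : Fin n × Fin m → ℂ)
    (hg : ∀ p : Fin n × Fin m, ¬ (p.1.1 < 2 ∧ p.2.1 < 2) → g p = 0) :
    ∑ p, g p = ∑ a : Fin 2 × Fin 2, g (⟨a.1.1, by omega⟩, ⟨a.2.1, by omega⟩) := by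
  have e1 : ∑ p, g p =
      (g (⟨0, by omega⟩, ⟨0, by omega⟩) + g (⟨0, by omega⟩, ⟨1, by omega⟩)) +
      (g (⟨1, by omega⟩, ⟨0, by omega⟩) + g (⟨1, by omega⟩, ⟨1, by omega⟩)) := by
    rw [Fintype.sum_prod_type,
      sum_two hn _ (fun s hs => Finset.sum_eq_zero fun i _ => hg _ (by simp; omega)),
      sum_two hm _ (fun k hk => hg _ (by simpa using hk)),
      sum_two hm _ (fun k hk => hg _ (by simpa using hk))]
  rw [e1, Fintype.sum_prod_type]
  simp only [Fin.sum_univ_two]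
  rfl

lemma qf_ext (hn : 2 ≤ n) (hm : 2 ≤ m)
    (G : Fin 2 → Fin 2 → Matrix (Fin 2) (Fin 2) ℂ) (v : Fin 2 × Fin 2 → ℂ) :
    star (extv n m v) ⬝ᵥ (blockM (bigG n m G)) *ᵥ (extv n m v) =
      star v ⬝ᵥ (blockM G) *ᵥ v := by
  simp only [dotProduct, Matrix.mulVec, Pi.star_apply]
  have hzero : ∀ p : Fin n × Fin m, ¬ (p.1.1 < 2 ∧ p.2.1 < 2) → extv n m v p = 0 := by
    intro p hp; unfold extv; rw [dif_neg hp]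
  rw [sum_corner hn hm _ (fun p hp => by rw [hzero p hp]; simp)]
  apply Finset.sum_congr rfl
  intro a _
  have hv1 : extv n m v (⟨a.1.1, by omega⟩, ⟨a.2.1, by omega⟩) = v a := by
    unfold extv
    rw [dif_pos ⟨a.1.2, a.2.2⟩]
  rw [hv1]
  congr 1
  rw [sum_corner hn hm _ (fun q hq => by rw [hzero q hq, mul_zero])]
  apply Finset.sum_congr rfl
  intro b _
  have hv2 : extv n m v (⟨b.1.1, by omega⟩, ⟨b.2.1, by omega⟩) = v b := by
    unfold extv
    rw [dif_pos ⟨b.1.2, b.2.2⟩]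
  rw [hv2]
  congr 1
  rw [blockM_bigG_apply hn hm]
  rw [dif_pos ⟨⟨a.1.2, a.2.2⟩, b.1.2, b.2.2⟩]


lemma padd_comp (g : ℝ → ℝ) (hg : g 0 = 0) (d : Fin 2 → ℝ) :
    (fun i : Fin m => g (padd m d i)) = padd m (fun i => g (d i)) := by
  funext i
  unfold padd
  split
  · rfl
  · exact hg

theorem master (m n : ℕ) (hm : 2 ≤ m) (hn : 2 ≤ n) (f : ℝ → ℝ) (hf : f 0 = 0)
    (P₀ Q₀ : Fin 2 → Fin 2 → Matrix (Fin 2) (Fin 2) ℂ)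
    (d₀ : Fin 2 → Fin 2 → Fin 2 → ℝ)
    (hPQ : ∀ s t, P₀ s t * Q₀ s t = 1) (hQP : ∀ s t, Q₀ s t * P₀ s t = 1)
    (W : Matrix (Fin 2) (Fin 2 × Fin 2) ℂ)
    (hW : blockM (fun s t => P₀ s t * Matrix.diagonal (fun i => ((d₀ s t i : ℝ) : ℂ)) * Q₀ s t)
        = Wᴴ * W)
    (v : Fin 2 × Fin 2 → ℂ)
    (hv : ¬ (0 : ℂ) ≤ star v ⬝ᵥ
      (blockM (fun s t => P₀ s t *
        Matrix.diagonal (fun i => ((f (d₀ s t i) : ℝ) : ℂ)) * Q₀ s t)) *ᵥ v) :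
    ∃ (P : Fin n → Fin n → Matrix (Fin m) (Fin m) ℂ) (d : Fin n → Fin n → Fin m → ℝ),
      (∀ s t, IsUnit (P s t)) ∧
      (blockM fun s t =>
        P s t * Matrix.diagonal (fun i => ((d s t i : ℝ) : ℂ)) * (P s t)⁻¹).PosSemidef ∧
      ¬ (blockM fun s t =>
        P s t * Matrix.diagonal (fun i => ((f (d s t i) : ℝ) : ℂ)) *
          (P s t)⁻¹).PosSemidef := by
  have key : ∀ (g : ℝ → ℝ), g 0 = 0 →
      (blockM fun s t : Fin n =>
        (if h : s.1 < 2 ∧ t.1 < 2 then padM m (P₀ ⟨s.1, h.1⟩ ⟨t.1, h.2⟩) else 1) *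
          Matrix.diagonal (fun i : Fin m =>
            ((g ((if h : s.1 < 2 ∧ t.1 < 2 then padd m (d₀ ⟨s.1, h.1⟩ ⟨t.1, h.2⟩) else 0) i)
              : ℝ) : ℂ)) *
          (if h : s.1 < 2 ∧ t.1 < 2 then padM m (P₀ ⟨s.1, h.1⟩ ⟨t.1, h.2⟩) else 1)⁻¹)
      = blockM (bigG n m (fun a b =>
          P₀ a b * Matrix.diagonal (fun i => ((g (d₀ a b i) : ℝ) : ℂ)) * Q₀ a b)) := by
    intro g hg
    refine congrArg blockM ?_
    funext s t
    by_cases h : s.1 < 2 ∧ t.1 < 2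
    · simp only [dif_pos h]
      have hinv : (padM m (P₀ ⟨s.1, h.1⟩ ⟨t.1, h.2⟩))⁻¹ = padM m (Q₀ ⟨s.1, h.1⟩ ⟨t.1, h.2⟩) :=
        Matrix.inv_eq_right_inv (by rw [padM_mul hm, hPQ, padM_one])
      have h2 : (fun i : Fin m => ((g (padd m (d₀ ⟨s.1, h.1⟩ ⟨t.1, h.2⟩) i) : ℝ) : ℂ))
          = fun i => ((padd m (fun j => g (d₀ ⟨s.1, h.1⟩ ⟨t.1, h.2⟩ j)) i : ℝ) : ℂ) := by
        funext i
        unfold padd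
        split
        · rfl
        · rw [hg]
      rw [h2, hinv, diagonal_padd, padM_mul_embM hm, embM_mul_padM hm, bigG, dif_pos h]
    · simp only [dif_neg h, bigG]
      have h3 : (fun i : Fin m => ((g ((0 : Fin m → ℝ) i) : ℝ) : ℂ)) = fun _ => (0 : ℂ) := by
        funext i
        simp [hg]
      rw [h3]
      simp
  refine ⟨fun s t => if h : s.1 < 2 ∧ t.1 < 2 then padM m (P₀ ⟨s.1, h.1⟩ ⟨t.1, h.2⟩) else 1,
    fun s t => if h : s.1 < 2 ∧ t.1 < 2 then padd m (d₀ ⟨s.1, h.1⟩ ⟨t.1, h.2⟩) else 0,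
    ?_, ?_, ?_⟩
  case refine_1 =>
    intro s t
    dsimp only
    by_cases h : s.1 < 2 ∧ t.1 < 2
    · rw [dif_pos h]
      exact isUnit_iff_exists.mpr ⟨padM m (Q₀ ⟨s.1, h.1⟩ ⟨t.1, h.2⟩),
        by rw [padM_mul hm, hPQ, padM_one], by rw [padM_mul hm, hQP, padM_one]⟩
    · rw [dif_neg h]; exact isUnit_one
  case refine_2 =>
    simp only [key (fun x => x) rfl]
    rw [blockM_bigG_gram hn hm _ W hW]
    exact Matrix.posSemidef_conjTranspose_mul_self _
  case refine_3 =>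
    simp only [key f hf]
    intro hpsd
    apply hv
    have h2 := hpsd.dotProduct_mulVec_nonneg (extv n m v)
    rwa [qf_ext hn hm] at h2

end CEX

namespace CEX1

noncomputable def P₀ : Fin 2 → Fin 2 → Matrix (Fin 2) (Fin 2) ℂ :=
  ![![!![1, 1; 1, -1], 1], ![1, !![1, 1; 1, -1]]]

noncomputable def Q₀ : Fin 2 → Fin 2 → Matrix (Fin 2) (Fin 2) ℂ :=
  ![![!![1/2, 1/2; 1/2, -1/2], 1], ![1, !![1/2, 1/2; 1/2, -1/2]]]

def d₀ : Fin 2 → Fin 2 → Fin 2 → ℝ :=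
  ![![![4, 1], ![2, -2]], ![![2, -2], ![4, 1]]]

noncomputable def W : Matrix (Fin 2) (Fin 2 × Fin 2) ℂ :=
  Matrix.of fun r p => ![![![(3:ℂ)/2, 1/2], ![3/2, 1/2]], ![![1/2, 3/2], ![-1/2, -3/2]]] r p.1 p.2

lemma hPQ : ∀ s t, P₀ s t * Q₀ s t = 1 := by
  intro s t
  fin_cases s <;> fin_cases t <;>
    · ext i j
      fin_cases i <;> fin_cases j <;>
        simp [P₀, Q₀, Matrix.mul_apply, Fin.sum_univ_two, Matrix.one_apply] <;> norm_num

lemma hQP : ∀ s t, Q₀ s t * P₀ s t = 1 := by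
  intro s t
  fin_cases s <;> fin_cases t <;>
    · ext i j
      fin_cases i <;> fin_cases j <;>
        simp [P₀, Q₀, Matrix.mul_apply, Fin.sum_univ_two, Matrix.one_apply] <;> norm_num

lemma hW : blockM (fun s t => P₀ s t * Matrix.diagonal (fun i => ((d₀ s t i : ℝ) : ℂ)) * Q₀ s t)
    = Wᴴ * W := by
  ext ⟨s, i⟩ ⟨t, j⟩
  fin_cases s <;> fin_cases t <;> fin_cases i <;> fin_cases j <;>
    · simp [blockM, P₀, Q₀, d₀, W, Matrix.mul_apply, Fin.sum_univ_two,
        Matrix.diagonal_apply, Matrix.conjTranspose_apply]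
      norm_num [map_ofNat]

end CEX1

namespace CEX1b
open CEX1

lemma phi1 (α : ℝ) : phiPow α 1 = 1 := by simp [phiPow]
lemma phi4 (α : ℝ) : phiPow α 4 = (2:ℝ)^α * (2:ℝ)^α := by
  rw [phiPow, if_neg (by norm_num), show |(4:ℝ)| = 2*2 by norm_num,
    Real.mul_rpow (by norm_num) (by norm_num)]
lemma phi2 (α : ℝ) : phiPow α 2 = (2:ℝ)^α := by
  rw [phiPow, if_neg (by norm_num), show |(2:ℝ)| = 2 by norm_num]
lemma phineg2 (α : ℝ) : phiPow α (-2) = (2:ℝ)^α := by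
  rw [phiPow, if_neg (by norm_num), show |(-2:ℝ)| = 2 by norm_num]

noncomputable def vpos : Fin 2 × Fin 2 → ℂ := fun p => ![![(1:ℂ),-1],![-1,1]] p.1 p.2
noncomputable def vneg : Fin 2 × Fin 2 → ℂ := fun p => ![![(1:ℂ),1],![-1,-1]] p.1 p.2

lemma qfpos (α : ℝ) :
    star vpos ⬝ᵥ (blockM (fun s t => P₀ s t *
      Matrix.diagonal (fun i => ((phiPow α (d₀ s t i) : ℝ) : ℂ)) * Q₀ s t)) *ᵥ vpos
    = ((4 - 4*(2:ℝ)^α : ℝ) : ℂ) := by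
  simp [dotProduct, Matrix.mulVec, Fintype.sum_prod_type, Fin.sum_univ_two, blockM,
    P₀, Q₀, d₀, Matrix.mul_apply, Matrix.diagonal_apply, vpos,
    phi1, phi2, phi4, phineg2]
  push_cast
  ring

lemma qfneg (α : ℝ) :
    star vneg ⬝ᵥ (blockM (fun s t => P₀ s t *
      Matrix.diagonal (fun i => ((phiPow α (d₀ s t i) : ℝ) : ℂ)) * Q₀ s t)) *ᵥ vneg
    = ((4*((2:ℝ)^α * (2:ℝ)^α) - 4*(2:ℝ)^α : ℝ) : ℂ) := by
  simp [dotProduct, Matrix.mulVec, Fintype.sum_prod_type, Fin.sum_univ_two, blockM,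
    P₀, Q₀, d₀, Matrix.mul_apply, Matrix.diagonal_apply, vneg,
    phi1, phi2, phi4, phineg2]
  push_cast
  ring

lemma hv_pos (α : ℝ) (hα : 0 < α) :
    ¬ (0:ℂ) ≤ star vpos ⬝ᵥ (blockM (fun s t => P₀ s t *
      Matrix.diagonal (fun i => ((phiPow α (d₀ s t i) : ℝ) : ℂ)) * Q₀ s t)) *ᵥ vpos := by
  rw [qfpos, Complex.zero_le_real]
  have : 1 < (2:ℝ)^α := (Real.one_lt_rpow_iff_of_pos (by norm_num)).mpr (Or.inl ⟨by norm_num, hα⟩)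
  intro h
  linarith

lemma hv_neg (α : ℝ) (hα : α < 0) :
    ¬ (0:ℂ) ≤ star vneg ⬝ᵥ (blockM (fun s t => P₀ s t *
      Matrix.diagonal (fun i => ((phiPow α (d₀ s t i) : ℝ) : ℂ)) * Q₀ s t)) *ᵥ vneg := by
  rw [qfneg, Complex.zero_le_real]
  have h1 : (2:ℝ)^α < 1 := Real.rpow_lt_one_of_one_lt_of_neg (by norm_num) hα
  have h2 : 0 < (2:ℝ)^α := Real.rpow_pos_of_pos (by norm_num) α
  intro h
  nlinarith

end CEX1b

namespace CEX2

noncomputable def P₀ : Fin 2 → Fin 2 → Matrix (Fin 2) (Fin 2) ℂ :=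
  ![![1, !![1, -4; 0, 3]], ![!![3, 0; 4, 1], 1]]

noncomputable def Q₀ : Fin 2 → Fin 2 → Matrix (Fin 2) (Fin 2) ℂ :=
  ![![1, !![1, 4/3; 0, 1/3]], ![!![1/3, 0; -4/3, 1], 1]]

noncomputable def d₀ : Fin 2 → Fin 2 → Fin 2 → ℝ :=
  ![![![1, 0], ![3/5, 0]], ![![3/5, 0], ![1, 1]]]

noncomputable def W : Matrix (Fin 2) (Fin 2 × Fin 2) ℂ :=
  Matrix.of fun r p => ![![![(3:ℂ)/5, 0], ![1, 0]], ![![4/5, 0], ![0, 1]]] r p.1 p.2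

noncomputable def v : Fin 2 × Fin 2 → ℂ := fun p => ![![(3:ℂ), 0], ![-3, -4]] p.1 p.2

lemma hPQ : ∀ s t, P₀ s t * Q₀ s t = 1 := by
  intro s t
  fin_cases s <;> fin_cases t <;>
    · ext i j
      fin_cases i <;> fin_cases j <;>
        simp [P₀, Q₀, Matrix.mul_apply, Fin.sum_univ_two, Matrix.one_apply] <;> norm_num

lemma hQP : ∀ s t, Q₀ s t * P₀ s t = 1 := by
  intro s t
  fin_cases s <;> fin_cases t <;>
    · ext i j
      fin_cases i <;> fin_cases j <;>
        simp [P₀, Q₀, Matrix.mul_apply, Fin.sum_univ_two, Matrix.one_apply] <;> norm_num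

lemma hW : blockM (fun s t => P₀ s t * Matrix.diagonal (fun i => ((d₀ s t i : ℝ) : ℂ)) * Q₀ s t)
    = Wᴴ * W := by
  ext ⟨s, i⟩ ⟨t, j⟩
  fin_cases s <;> fin_cases t <;> fin_cases i <;> fin_cases j <;>
    · simp [blockM, P₀, Q₀, d₀, W, Matrix.mul_apply, Fin.sum_univ_two,
        Matrix.diagonal_apply, Matrix.conjTranspose_apply, Matrix.one_apply]
      try norm_num [map_ofNat]

lemma phi0 : phiPow 0 0 = 0 := by simp [phiPow]
lemma phi1 : phiPow 0 1 = 1 := by simp [phiPow]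
lemma phi35 : phiPow 0 (3/5) = 1 := by rw [phiPow, if_neg (by norm_num), Real.rpow_zero]

lemma hv :
    ¬ (0:ℂ) ≤ star v ⬝ᵥ (blockM (fun s t => P₀ s t *
      Matrix.diagonal (fun i => ((phiPow 0 (d₀ s t i) : ℝ) : ℂ)) * Q₀ s t)) *ᵥ v := by
  have e : star v ⬝ᵥ (blockM (fun s t => P₀ s t *
      Matrix.diagonal (fun i => ((phiPow 0 (d₀ s t i) : ℝ) : ℂ)) * Q₀ s t)) *ᵥ v
      = ((-16 : ℝ) : ℂ) := by
    simp [dotProduct, Matrix.mulVec, Fintype.sum_prod_type, Fin.sum_univ_two, blockM,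
      P₀, Q₀, d₀, Matrix.mul_apply, Matrix.diagonal_apply, Matrix.one_apply, v,
      phi0, phi1, phi35, map_ofNat]
    push_cast
    ring
  rw [e, Complex.zero_le_real]
  norm_num

end CEX2

/-- Theorem 1(2): for every `α ∈ ℝ`, the blockwise map `φ_α^{[m]}` fails to preserve
positivity on `mn × mn` positive semidefinite block matrices whose `m × m` blocks are
diagonalizable with real spectrum.  Diagonalizable blocks with real spectrum are encoded
by explicit eigendecompositions `H s t = P s t * diagonal (d s t) * (P s t)⁻¹`. -/
theorem phi_blockwise_never_preserves_psd (m n : ℕ) (hm : 2 ≤ m) (hn : 2 ≤ n) (α : ℝ) :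
    ∃ (P : Fin n → Fin n → Matrix (Fin m) (Fin m) ℂ) (d : Fin n → Fin n → Fin m → ℝ),
      (∀ s t, IsUnit (P s t)) ∧
      (blockM fun s t =>
        P s t * Matrix.diagonal (fun i => ((d s t i : ℝ) : ℂ)) * (P s t)⁻¹).PosSemidef ∧
      ¬ (blockM fun s t =>
        P s t * Matrix.diagonal (fun i => ((phiPow α (d s t i) : ℝ) : ℂ)) *
          (P s t)⁻¹).PosSemidef := by
  have hf : phiPow α 0 = 0 := by simp [phiPow]
  rcases lt_trichotomy α 0 with h | h | h
  · exact CEX.master m n hm hn (phiPow α) hf CEX1.P₀ CEX1.Q₀ CEX1.d₀ CEX1.hPQ CEX1.hQP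
      CEX1.W CEX1.hW CEX1b.vneg (CEX1b.hv_neg α h)
  · subst h
    exact CEX.master m n hm hn (phiPow 0) hf CEX2.P₀ CEX2.Q₀ CEX2.d₀ CEX2.hPQ CEX2.hQP
      CEX2.W CEX2.hW CEX2.v CEX2.hv
  · exact CEX.master m n hm hn (phiPow α) hf CEX1.P₀ CEX1.Q₀ CEX1.d₀ CEX1.hPQ CEX1.hQP
      CEX1.W CEX1.hW CEX1b.vpos (CEX1b.hv_pos α h)
end

section
/- Let m, n ≥ 2 be integers. For α ∈ ℝ, the blockwise map ψ_α^{[m]} preserves positivity on 𝒫^{[m]}_{mn}(ℝ) (i.e., ψ_α^{[m]}[H] is positive semidefinite for every H ∈ 𝒫^{[m]}_{mn}(ℝ)) if and only if α = 1. -/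
open scoped Classical ComplexOrder

section PsiAux

open Matrix

variable {m : ℕ}

private lemma sumTwo {M : Type*} [AddCommMonoid M] {i0 i1 : Fin m} (h : i0 ≠ i1)
    (f : Fin m → M) (hf : ∀ k, k ≠ i0 → k ≠ i1 → f k = 0) : ∑ k, f k = f i0 + f i1 := by
  rw [← Finset.sum_pair h]
  refine (Finset.sum_subset (Finset.subset_univ _) ?_).symm
  intro x _ hx
  simp only [Finset.mem_insert, Finset.mem_singleton, not_or] at hx
  exact hf x hx.1 hx.2

/-- The eigenvector matrix of `B = [[0,2],[1/2,0]]`, embedded in the `(i0,i1)` corner. -/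
noncomputable def PmM (i0 i1 : Fin m) : Matrix (Fin m) (Fin m) ℂ :=
  Matrix.of fun i k =>
    if i = i0 then (if k = i0 then 2 else if k = i1 then 2 else 0)
    else if i = i1 then (if k = i0 then 1 else if k = i1 then -1 else 0)
    else if i = k then 1 else 0

/-- The inverse of `PmM`. -/
noncomputable def QmM (i0 i1 : Fin m) : Matrix (Fin m) (Fin m) ℂ :=
  Matrix.of fun i k =>
    if i = i0 then (if k = i0 then 1/4 else if k = i1 then 1/2 else 0)
    else if i = i1 then (if k = i0 then 1/4 else if k = i1 then -(1/2) else 0)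
    else if i = k then 1 else 0

/-- The involution `B = [[0,2],[1/2,0]]` embedded in the `(i0,i1)` corner. -/
noncomputable def BmM (i0 i1 : Fin m) : Matrix (Fin m) (Fin m) ℂ :=
  Matrix.of fun i j =>
    if i = i0 then (if j = i1 then 2 else 0)
    else if i = i1 then (if j = i0 then 1/2 else 0) else 0

noncomputable def dSr (i0 i1 : Fin m) : Fin m → ℝ :=
  fun i => if i = i0 then 4 else if i = i1 then 1/4 else 0
noncomputable def dBr (i0 i1 : Fin m) : Fin m → ℝ :=
  fun i => if i = i0 then 1 else if i = i1 then -1 else 0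
noncomputable def dIr (i0 i1 : Fin m) : Fin m → ℝ :=
  fun i => if i = i0 then 1 else if i = i1 then 1 else 0

private lemma PmM_mul_QmM (i0 i1 : Fin m) (h : i0 ≠ i1) : PmM i0 i1 * QmM i0 i1 = 1 := by
  ext i j
  rw [Matrix.mul_apply]
  by_cases hi0 : i = i0
  · rw [sumTwo h _ (fun k hk0 hk1 => by simp [PmM, hi0, hk0, hk1])]
    simp only [PmM, QmM, Matrix.of_apply, Matrix.one_apply, hi0, if_pos rfl]
    split_ifs <;> subst_vars <;>
      first | rfl | (exact absurd rfl (by assumption)) | contradiction | norm_num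
  · by_cases hi1 : i = i1
    · rw [sumTwo h _ (fun k hk0 hk1 => by simp [PmM, hi0, hi1, hk0, hk1])]
      simp only [PmM, QmM, Matrix.of_apply, Matrix.one_apply, hi0, hi1, if_pos rfl, if_neg]
      split_ifs <;> subst_vars <;>
        first | rfl | (exact absurd rfl (by assumption)) | contradiction | norm_num
    · rw [Finset.sum_eq_single i (fun k _ hk => by simp [PmM, hi0, hi1, (Ne.symm hk)])
        (by simp)]
      simp only [PmM, QmM, Matrix.of_apply, Matrix.one_apply, hi0, hi1, if_neg, if_pos rfl]
      split_ifs <;> subst_vars <;>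
        first | rfl | (exact absurd rfl (by assumption)) | contradiction | norm_num

private lemma PmM_D_QmM (i0 i1 : Fin m) (h : i0 ≠ i1) :
    PmM i0 i1 * Matrix.diagonal (fun i => ((dBr i0 i1 i : ℝ) : ℂ)) * QmM i0 i1 = BmM i0 i1 := by
  ext i j
  rw [Matrix.mul_apply]
  by_cases hi0 : i = i0
  · rw [sumTwo h _ (fun k hk0 hk1 => by simp [Matrix.mul_diagonal, dBr, hk0, hk1])]
    simp only [Matrix.mul_diagonal, PmM, QmM, BmM, dBr, Matrix.of_apply, hi0, if_pos rfl]
    split_ifs <;> subst_vars <;>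
      first | rfl | (exact absurd rfl (by assumption)) | contradiction | norm_num
  · by_cases hi1 : i = i1
    · rw [sumTwo h _ (fun k hk0 hk1 => by simp [Matrix.mul_diagonal, dBr, hk0, hk1])]
      simp only [Matrix.mul_diagonal, PmM, QmM, BmM, dBr, Matrix.of_apply, hi0, hi1, if_pos rfl]
      split_ifs <;> subst_vars <;>
        first | rfl | (exact absurd rfl (by assumption)) | contradiction | norm_num
    · rw [sumTwo h _ (fun k hk0 hk1 => by simp [Matrix.mul_diagonal, dBr, hk0, hk1])]
      simp only [Matrix.mul_diagonal, PmM, QmM, BmM, dBr, Matrix.of_apply, hi0, hi1]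
      split_ifs <;> subst_vars <;>
        first | rfl | (exact absurd rfl (by assumption)) | contradiction | norm_num

private lemma QmM_mul_PmM (i0 i1 : Fin m) (h : i0 ≠ i1) : QmM i0 i1 * PmM i0 i1 = 1 :=
  mul_eq_one_comm.mp (PmM_mul_QmM i0 i1 h)

private lemma PmM_inv (i0 i1 : Fin m) (h : i0 ≠ i1) : (PmM i0 i1)⁻¹ = QmM i0 i1 :=
  Matrix.inv_eq_right_inv (PmM_mul_QmM i0 i1 h)

private lemma QmMT_inv (i0 i1 : Fin m) (h : i0 ≠ i1) :
    ((QmM i0 i1)ᵀ)⁻¹ = (PmM i0 i1)ᵀ :=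
  Matrix.inv_eq_right_inv
    (by rw [← Matrix.transpose_mul, PmM_mul_QmM i0 i1 h, Matrix.transpose_one])

private lemma QmMT_D_PmMT (i0 i1 : Fin m) (h : i0 ≠ i1) :
    (QmM i0 i1)ᵀ * Matrix.diagonal (fun i => ((dBr i0 i1 i : ℝ) : ℂ)) * (PmM i0 i1)ᵀ
      = (BmM i0 i1)ᵀ := by
  have h2 := congrArg Matrix.transpose (PmM_D_QmM i0 i1 h)
  rw [Matrix.transpose_mul, Matrix.transpose_mul, Matrix.diagonal_transpose,
    ← Matrix.mul_assoc] at h2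
  exact h2

private lemma isUnit_PmM (i0 i1 : Fin m) (h : i0 ≠ i1) : IsUnit (PmM i0 i1) :=
  isUnit_iff_exists.mpr ⟨QmM i0 i1, PmM_mul_QmM i0 i1 h, QmM_mul_PmM i0 i1 h⟩

private lemma isUnit_QmMT (i0 i1 : Fin m) (h : i0 ≠ i1) : IsUnit ((QmM i0 i1)ᵀ) :=
  isUnit_iff_exists.mpr ⟨(PmM i0 i1)ᵀ,
    by rw [← Matrix.transpose_mul, PmM_mul_QmM i0 i1 h, Matrix.transpose_one],
    by rw [← Matrix.transpose_mul, QmM_mul_PmM i0 i1 h, Matrix.transpose_one]⟩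

private lemma psiPow_of_pos (α : ℝ) {x : ℝ} (hx : 0 < x) : psiPow α x = x ^ α := by
  rw [psiPow, if_neg hx.ne', Real.sign_of_pos hx, abs_of_pos hx, one_mul]

private lemma psiPow_zero (α : ℝ) : psiPow α 0 = 0 := by simp [psiPow]

private lemma psiPow_one (α : ℝ) : psiPow α 1 = 1 := by
  rw [psiPow_of_pos α one_pos, Real.one_rpow]

private lemma psiPow_neg_one (α : ℝ) : psiPow α (-1) = -1 := by
  rw [psiPow, if_neg (by norm_num), Real.sign_of_neg (by norm_num)]
  norm_num [Real.one_rpow]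

end PsiAux

section PsiAux2
open Matrix
variable {m n : ℕ}

noncomputable def PF (s0 s1 : Fin n) (i0 i1 : Fin m) :
    Fin n → Fin n → Matrix (Fin m) (Fin m) ℂ := fun s t =>
  if s = s0 then (if t = s1 then PmM i0 i1 else 1)
  else if s = s1 then (if t = s0 then (QmM i0 i1)ᵀ else 1) else 1

noncomputable def DF (s0 s1 : Fin n) (i0 i1 : Fin m) :
    Fin n → Fin n → Fin m → ℝ := fun s t =>
  if s = s0 then (if t = s0 then dSr i0 i1 else if t = s1 then dBr i0 i1 else 0)
  else if s = s1 then (if t = s0 then dBr i0 i1 else if t = s1 then dIr i0 i1 else 0)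
  else 0

private lemma diag_two_eq (i0 i1 : Fin m) (h : i0 ≠ i1) (a b : ℝ) :
    Matrix.diagonal (fun i => (((if i = i0 then a else if i = i1 then b else 0) : ℝ) : ℂ))
      = Matrix.of (fun i j =>
          if i = i0 then (if j = i0 then ((a : ℝ) : ℂ) else 0)
          else if i = i1 then (if j = i1 then ((b : ℝ) : ℂ) else 0) else 0) := by
  ext i j
  rw [Matrix.diagonal_apply]
  simp only [Matrix.of_apply]
  split_ifs <;> subst_vars <;>
    first | rfl | (exact absurd rfl (by assumption)) | contradiction | norm_num

/-- The `diag(4, 1/4)` block. -/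
noncomputable def SmM (i0 i1 : Fin m) : Matrix (Fin m) (Fin m) ℂ :=
  Matrix.of fun i j =>
    if i = i0 then (if j = i0 then (((4:ℝ)) : ℂ) else 0)
    else if i = i1 then (if j = i1 then (((1/4:ℝ)) : ℂ) else 0) else 0

/-- The `diag(1, 1)` block. -/
noncomputable def ImM (i0 i1 : Fin m) : Matrix (Fin m) (Fin m) ℂ :=
  Matrix.of fun i j =>
    if i = i0 then (if j = i0 then (((1:ℝ)) : ℂ) else 0)
    else if i = i1 then (if j = i1 then (((1:ℝ)) : ℂ) else 0) else 0

/-- The `diag(4 ^ α, (1/4) ^ α)` block. -/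
noncomputable def SpsiM (α : ℝ) (i0 i1 : Fin m) : Matrix (Fin m) (Fin m) ℂ :=
  Matrix.of fun i j =>
    if i = i0 then (if j = i0 then (((4:ℝ) ^ α : ℝ) : ℂ) else 0)
    else if i = i1 then (if j = i1 then ((((1:ℝ)/4) ^ α : ℝ) : ℂ) else 0) else 0

/-- The blocks of the counterexample matrix. -/
noncomputable def GF (s0 s1 : Fin n) (i0 i1 : Fin m) :
    Fin n → Fin n → Matrix (Fin m) (Fin m) ℂ := fun s t =>
  if s = s0 then
    (if t = s0 then SmM i0 i1
     else if t = s1 then BmM i0 i1 else 0)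
  else if s = s1 then
    (if t = s0 then (BmM i0 i1)ᵀ
     else if t = s1 then ImM i0 i1 else 0)
  else 0

/-- The blocks of the ψ-image of the counterexample matrix. -/
noncomputable def GFpsi (α : ℝ) (s0 s1 : Fin n) (i0 i1 : Fin m) :
    Fin n → Fin n → Matrix (Fin m) (Fin m) ℂ := fun s t =>
  if s = s0 then
    (if t = s0 then SpsiM α i0 i1
     else if t = s1 then BmM i0 i1 else 0)
  else if s = s1 then
    (if t = s0 then (BmM i0 i1)ᵀ
     else if t = s1 then ImM i0 i1 else 0)
  else 0

private lemma psi_dBr (α : ℝ) (i0 i1 : Fin m) :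
    (fun i => ((psiPow α (dBr i0 i1 i) : ℝ) : ℂ)) = fun i => ((dBr i0 i1 i : ℝ) : ℂ) := by
  funext i
  simp only [dBr]
  split_ifs <;> simp [psiPow_one, psiPow_neg_one, psiPow_zero]

private lemma psi_dIr (α : ℝ) (i0 i1 : Fin m) :
    (fun i => ((psiPow α (dIr i0 i1 i) : ℝ) : ℂ)) = fun i => ((dIr i0 i1 i : ℝ) : ℂ) := by
  funext i
  simp only [dIr]
  split_ifs <;> simp [psiPow_one, psiPow_zero]

private lemma psi_dSr (α : ℝ) (i0 i1 : Fin m) :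
    (fun i => ((psiPow α (dSr i0 i1 i) : ℝ) : ℂ))
      = fun i => (((if i = i0 then (4:ℝ) ^ α else if i = i1 then ((1:ℝ)/4) ^ α else 0) : ℝ) : ℂ) := by
  funext i
  simp only [dSr]
  split_ifs <;>
    simp [one_div, psiPow_zero, psiPow_of_pos α (show (0:ℝ) < 4 by norm_num),
      psiPow_of_pos α (show (0:ℝ) < 4⁻¹ by norm_num)]

private lemma blockEq (s0 s1 : Fin n) (i0 i1 : Fin m) (hs : s0 ≠ s1) (h : i0 ≠ i1) :
    (fun s t => PF s0 s1 i0 i1 s t *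
        Matrix.diagonal (fun i => ((DF s0 s1 i0 i1 s t i : ℝ) : ℂ)) * (PF s0 s1 i0 i1 s t)⁻¹)
      = GF s0 s1 i0 i1 := by
  funext s t
  by_cases hs0 : s = s0
  · by_cases ht0 : t = s0
    · simp only [PF, DF, GF, hs0, ht0, if_pos rfl, if_neg hs, if_neg (Ne.symm hs),
        ite_true, ite_false]
      rw [inv_one, one_mul, mul_one]
      simp only [dSr]
      rw [diag_two_eq i0 i1 h]
      rfl
    · by_cases ht1 : t = s1
      · simp only [PF, DF, GF, hs0, ht0, ht1, if_pos rfl, if_neg hs, if_neg (Ne.symm hs), ite_true, ite_false]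
        rw [PmM_inv i0 i1 h, PmM_D_QmM i0 i1 h]
      · simp [PF, DF, GF, hs0, ht0, ht1, hs, Ne.symm hs, inv_one]
  · by_cases hs1 : s = s1
    · by_cases ht0 : t = s0
      · simp only [PF, DF, GF, hs0, hs1, ht0, if_pos rfl, if_neg hs, if_neg (Ne.symm hs), ite_true, ite_false]
        rw [QmMT_inv i0 i1 h, QmMT_D_PmMT i0 i1 h]
      · by_cases ht1 : t = s1
        · simp only [PF, DF, GF, hs0, hs1, ht0, ht1, if_pos rfl, if_neg hs,
            if_neg (Ne.symm hs), ite_true, ite_false]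
          rw [inv_one, one_mul, mul_one]
          simp only [dIr]
          rw [diag_two_eq i0 i1 h]
          rfl
        · simp [PF, DF, GF, hs0, hs1, ht0, ht1, hs, Ne.symm hs, inv_one]
    · simp [PF, DF, GF, hs0, hs1, inv_one]

private lemma blockEqPsi (α : ℝ) (s0 s1 : Fin n) (i0 i1 : Fin m) (hs : s0 ≠ s1) (h : i0 ≠ i1) :
    (fun s t => PF s0 s1 i0 i1 s t *
        Matrix.diagonal (fun i => ((psiPow α (DF s0 s1 i0 i1 s t i) : ℝ) : ℂ))
        * (PF s0 s1 i0 i1 s t)⁻¹)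
      = GFpsi α s0 s1 i0 i1 := by
  funext s t
  by_cases hs0 : s = s0
  · by_cases ht0 : t = s0
    · simp only [PF, DF, GFpsi, hs0, ht0, if_pos rfl, if_neg hs, if_neg (Ne.symm hs),
        ite_true, ite_false]
      rw [psi_dSr α i0 i1, inv_one, one_mul, mul_one, diag_two_eq i0 i1 h]
      rfl
    · by_cases ht1 : t = s1
      · simp only [PF, DF, GFpsi, hs0, ht0, ht1, if_pos rfl, if_neg hs, if_neg (Ne.symm hs), ite_true, ite_false]
        rw [psi_dBr α i0 i1, PmM_inv i0 i1 h, PmM_D_QmM i0 i1 h]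
      · simp [PF, DF, GFpsi, hs0, ht0, ht1, hs, Ne.symm hs, inv_one, psiPow_zero]
  · by_cases hs1 : s = s1
    · by_cases ht0 : t = s0
      · simp only [PF, DF, GFpsi, hs0, hs1, ht0, if_pos rfl, if_neg hs, if_neg (Ne.symm hs), ite_true, ite_false]
        rw [psi_dBr α i0 i1, QmMT_inv i0 i1 h, QmMT_D_PmMT i0 i1 h]
      · by_cases ht1 : t = s1
        · simp only [PF, DF, GFpsi, hs0, hs1, ht0, ht1, if_pos rfl, if_neg hs,
            if_neg (Ne.symm hs), ite_true, ite_false]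
          rw [psi_dIr α i0 i1, inv_one, one_mul, mul_one]
          simp only [dIr]
          rw [diag_two_eq i0 i1 h]
          rfl
        · simp [PF, DF, GFpsi, hs0, hs1, ht0, ht1, hs, Ne.symm hs, inv_one, psiPow_zero]
    · simp [PF, DF, GFpsi, hs0, hs1, inv_one, psiPow_zero]

end PsiAux2

section PsiAux3
open Matrix
variable {m n : ℕ}

/-- Square root factor of the counterexample matrix. -/
noncomputable def AF (s0 s1 : Fin n) (i0 i1 : Fin m) : Matrix (Fin 2) (Fin n × Fin m) ℂ :=
  Matrix.of fun k p =>
    if p.1 = s0 then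
      (if k = 0 then (if p.2 = i1 then 1/2 else 0) else (if p.2 = i0 then 2 else 0))
    else if p.1 = s1 then
      (if k = 0 then (if p.2 = i0 then 1 else 0) else (if p.2 = i1 then 1 else 0))
    else 0

private lemma blockM_GF (s0 s1 : Fin n) (i0 i1 : Fin m) (hs : s0 ≠ s1) (h : i0 ≠ i1) :
    blockM (GF s0 s1 i0 i1) = (AF s0 s1 i0 i1)ᴴ * (AF s0 s1 i0 i1) := by
  ext p q
  obtain ⟨s, i⟩ := p
  obtain ⟨t, j⟩ := q
  rw [Matrix.mul_apply, Fin.sum_univ_two]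
  simp only [blockM, Matrix.of_apply, Matrix.conjTranspose_apply, AF, GF, BmM, SmM, ImM,
    Matrix.transpose_apply]
  by_cases hs0 : s = s0 <;> by_cases hs1 : s = s1 <;>
    by_cases ht0 : t = s0 <;> by_cases ht1 : t = s1 <;>
    by_cases hi0 : i = i0 <;> by_cases hi1 : i = i1 <;>
    by_cases hj0 : j = i0 <;> by_cases hj1 : j = i1 <;>
    simp [hs0, hs1, ht0, ht1, hi0, hi1, hj0, hj1, hs, Ne.symm hs,
      h, Ne.symm h, apply_ite (star : ℂ → ℂ)] <;>
    norm_num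

private lemma quadForm {ι : Type*} [Fintype ι] [DecidableEq ι]
    (M : Matrix ι ι ℂ) (p1 p2 : ι) (c1 c2 : ℂ) :
    star (Pi.single p1 c1 + Pi.single p2 c2) ⬝ᵥ M *ᵥ (Pi.single p1 c1 + Pi.single p2 c2)
      = star c1 * (M p1 p1 * c1 + M p1 p2 * c2)
        + star c2 * (M p2 p1 * c1 + M p2 p2 * c2) := by
  have hstar : ∀ (p : ι) (c : ℂ), star (Pi.single p c : ι → ℂ) = Pi.single p (star c) :=
    fun p c => funext fun q => by simp [Pi.single_apply, apply_ite (star : ℂ → ℂ)]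
  rw [star_add, hstar, hstar, Matrix.mulVec_add, Matrix.mulVec_single, Matrix.mulVec_single,
    add_dotProduct, single_dotProduct, single_dotProduct]
  simp [Pi.add_apply]
  ring

end PsiAux3

/-- Theorem 1(3): the blockwise map `ψ_α^{[m]}` preserves positivity on `mn × mn`
positive semidefinite block matrices whose `m × m` blocks are diagonalizable with real
spectrum if and only if `α = 1`.  Diagonalizable blocks with real spectrum are encoded by
explicit eigendecompositions `H s t = P s t * diagonal (d s t) * (P s t)⁻¹` (the functional
calculus is independent of the decomposition chosen). -/
theorem psi_blockwise_preserves_psd_iff (m n : ℕ) (hm : 2 ≤ m) (hn : 2 ≤ n) (α : ℝ) :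
    (∀ (P : Fin n → Fin n → Matrix (Fin m) (Fin m) ℂ) (d : Fin n → Fin n → Fin m → ℝ),
      (∀ s t, IsUnit (P s t)) →
      (blockM fun s t =>
        P s t * Matrix.diagonal (fun i => ((d s t i : ℝ) : ℂ)) * (P s t)⁻¹).PosSemidef →
      (blockM fun s t =>
        P s t * Matrix.diagonal (fun i => ((psiPow α (d s t i) : ℝ) : ℂ)) *
          (P s t)⁻¹).PosSemidef) ↔ α = 1 := by
  constructor
  · intro hpres
    by_contra hne
    obtain ⟨i0, i1, h⟩ : ∃ i0 i1 : Fin m, i0 ≠ i1 :=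
      ⟨⟨0, by omega⟩, ⟨1, by omega⟩, by simp [Fin.ext_iff]⟩
    obtain ⟨s0, s1, hs⟩ : ∃ s0 s1 : Fin n, s0 ≠ s1 :=
      ⟨⟨0, by omega⟩, ⟨1, by omega⟩, by simp [Fin.ext_iff]⟩
    have hunit : ∀ s t, IsUnit (PF s0 s1 i0 i1 s t) := by
      intro s t
      simp only [PF]
      split_ifs <;>
        first
        | exact isUnit_PmM i0 i1 h
        | exact isUnit_QmMT i0 i1 h
        | exact isUnit_one
    have hpsd : (blockM fun s t => PF s0 s1 i0 i1 s t *
        Matrix.diagonal (fun i => ((DF s0 s1 i0 i1 s t i : ℝ) : ℂ)) *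
        (PF s0 s1 i0 i1 s t)⁻¹).PosSemidef := by
      rw [show (fun s t => PF s0 s1 i0 i1 s t *
          Matrix.diagonal (fun i => ((DF s0 s1 i0 i1 s t i : ℝ) : ℂ)) *
          (PF s0 s1 i0 i1 s t)⁻¹) = GF s0 s1 i0 i1 from blockEq s0 s1 i0 i1 hs h,
        blockM_GF s0 s1 i0 i1 hs h]
      exact Matrix.posSemidef_conjTranspose_mul_self _
    have himg := hpres (PF s0 s1 i0 i1) (DF s0 s1 i0 i1) hunit hpsd
    rw [show (fun s t => PF s0 s1 i0 i1 s t *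
        Matrix.diagonal (fun i => ((psiPow α (DF s0 s1 i0 i1 s t i) : ℝ) : ℂ)) *
        (PF s0 s1 i0 i1 s t)⁻¹) = GFpsi α s0 s1 i0 i1 from blockEqPsi α s0 s1 i0 i1 hs h]
      at himg
    rcases Ne.lt_or_gt hne with hlt | hgt
    · -- α < 1 : use the vector supported at (s0,i0) and (s1,i1)
      have hq := (Matrix.posSemidef_iff_dotProduct_mulVec.mp himg).2 (Pi.single (s0, i0) (1:ℂ) + Pi.single (s1, i1) (-2))
      rw [quadForm] at hq
      have e1 : blockM (GFpsi α s0 s1 i0 i1) (s0, i0) (s0, i0) = (((4:ℝ) ^ α : ℝ) : ℂ) := by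
        simp [blockM, GFpsi, SpsiM, hs, Ne.symm hs, h, Ne.symm h]
      have e2 : blockM (GFpsi α s0 s1 i0 i1) (s0, i0) (s1, i1) = 2 := by
        simp [blockM, GFpsi, BmM, hs, Ne.symm hs, h, Ne.symm h]
      have e3 : blockM (GFpsi α s0 s1 i0 i1) (s1, i1) (s0, i0) = 2 := by
        simp [blockM, GFpsi, BmM, hs, Ne.symm hs, h, Ne.symm h]
      have e4 : blockM (GFpsi α s0 s1 i0 i1) (s1, i1) (s1, i1) = 1 := by
        simp [blockM, GFpsi, ImM, hs, Ne.symm hs, h, Ne.symm h]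
      rw [e1, e2, e3, e4] at hq
      have hval : star (1:ℂ) * ((((4:ℝ) ^ α : ℝ) : ℂ) * 1 + 2 * (-2))
          + star (-2 : ℂ) * (2 * 1 + 1 * (-2)) = ((((4:ℝ) ^ α - 4 : ℝ)) : ℂ) := by
        simp only [star_one, star_neg]
        push_cast
        ring_nf
        try simp [Complex.star_def]
        try ring
      rw [hval, Complex.zero_le_real] at hq
      have : (4:ℝ) ^ α < 4 := by
        have h4 := Real.rpow_lt_rpow_of_exponent_lt (by norm_num : (1:ℝ) < 4) hlt
        rwa [Real.rpow_one] at h4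
      linarith
    · -- α > 1 : use the vector supported at (s0,i1) and (s1,i0)
      have hq := (Matrix.posSemidef_iff_dotProduct_mulVec.mp himg).2 (Pi.single (s0, i1) (1:ℂ) + Pi.single (s1, i0) (-(1/2)))
      rw [quadForm] at hq
      have e1 : blockM (GFpsi α s0 s1 i0 i1) (s0, i1) (s0, i1)
          = ((((1:ℝ)/4) ^ α : ℝ) : ℂ) := by
        simp [blockM, GFpsi, SpsiM, hs, Ne.symm hs, h, Ne.symm h]
      have e2 : blockM (GFpsi α s0 s1 i0 i1) (s0, i1) (s1, i0) = 1/2 := by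
        simp [blockM, GFpsi, BmM, hs, Ne.symm hs, h, Ne.symm h]
      have e3 : blockM (GFpsi α s0 s1 i0 i1) (s1, i0) (s0, i1) = 1/2 := by
        simp [blockM, GFpsi, BmM, hs, Ne.symm hs, h, Ne.symm h]
      have e4 : blockM (GFpsi α s0 s1 i0 i1) (s1, i0) (s1, i0) = 1 := by
        simp [blockM, GFpsi, ImM, hs, Ne.symm hs, h, Ne.symm h]
      rw [e1, e2, e3, e4] at hq
      have hval : star (1:ℂ) * (((((1:ℝ)/4) ^ α : ℝ) : ℂ) * 1 + 1/2 * (-(1/2)))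
          + star (-(1/2) : ℂ) * (1/2 * 1 + 1 * (-(1/2)))
          = (((((1:ℝ)/4) ^ α - 1/4 : ℝ)) : ℂ) := by
        simp only [star_one, star_neg]
        push_cast
        ring_nf
        try simp [Complex.star_def]
        try ring
      rw [hval, Complex.zero_le_real] at hq
      have : ((1:ℝ)/4) ^ α < 1/4 := by
        have h4 := Real.rpow_lt_rpow_of_exponent_gt (by norm_num : (0:ℝ) < 1/4)
          (by norm_num : (1:ℝ)/4 < 1) hgt
        rwa [Real.rpow_one] at h4
      linarith
  · rintro rfl P d hP hpsd
    have hps : ∀ x : ℝ, psiPow 1 x = x := by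
      intro x
      by_cases hx : x = 0
      · simp [psiPow, hx]
      · rw [psiPow, if_neg hx, Real.rpow_one]
        rcases lt_or_gt_of_ne hx with hx' | hx'
        · rw [Real.sign_of_neg hx', abs_of_neg hx']; ring
        · rw [Real.sign_of_pos hx', abs_of_pos hx']; ring
    simpa only [hps] using hpsd
end

section
/- Let m, n ≥ 2 be integers and α > 0 with α ∈ ℕ ∪ [n−2,∞). Then for all m×m Hermitian positive semidefinite matrices H_st (1 ≤ s,t ≤ n) that pairwise commute and such that the mn×mn block matrix (H_st)_{s,t=1}^n is positive semidefinite, the block matrix (H_st^α)_{s,t=1}^n is positive semidefinite. -/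
open scoped Classical ComplexOrder

section RealSide

open Matrix


section RealSide

open Matrix

open scoped MatrixOrder in
theorem Matrix.posSemidef_iff_eq_transpose_mul_self {𝕜 : Type*} [RCLike 𝕜] {N : ℕ}
    {A : Matrix (Fin N) (Fin N) 𝕜} : A.PosSemidef ↔ ∃ B : Matrix (Fin N) (Fin N) 𝕜, A = Bᴴ * B := by
  refine ⟨fun hA => ?_, fun ⟨B, hB⟩ => hB ▸ Matrix.posSemidef_conjTranspose_mul_self B⟩
  obtain ⟨X, hX, -, hXX⟩ := CFC.exists_sqrt_of_isSelfAdjoint_of_quasispectrumRestricts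
    hA.isHermitian (QuasispectrumRestricts.nnreal_of_nonneg hA.nonneg)
  exact ⟨X, by rw [← Matrix.star_eq_conjTranspose, hX.star_eq, hXX]⟩

lemma fPow_eq_rpow {α x : ℝ} (hα : 0 < α) (hx : 0 ≤ x) : fPow α x = x ^ α := by
  unfold fPow
  split_ifs with h
  · simp [h, Real.zero_rpow hα.ne']
  · rfl

lemma quad_expand {N : ℕ} (B : Matrix (Fin N) (Fin N) ℝ) (y : Fin N → ℝ) :
    dotProduct (star y) (B.mulVec y) = ∑ i, ∑ j, y i * B i j * y j := by
  simp [dotProduct, Matrix.mulVec, Finset.mul_sum, mul_assoc]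

lemma quad_nonneg {N : ℕ} {B : Matrix (Fin N) (Fin N) ℝ} (hB : B.PosSemidef) (y : Fin N → ℝ) :
    0 ≤ ∑ i, ∑ j, y i * B i j * y j := by
  rw [← quad_expand]; exact hB.dotProduct_mulVec_nonneg y

lemma posSemidef_of_quad {N : ℕ} {B : Matrix (Fin N) (Fin N) ℝ}
    (hsymm : ∀ i j, B j i = B i j)
    (hq : ∀ y : Fin N → ℝ, 0 ≤ ∑ i, ∑ j, y i * B i j * y j) : B.PosSemidef := by
  refine Matrix.PosSemidef.of_dotProduct_mulVec_nonneg ?_ ?_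
  · ext i j
    simp [Matrix.conjTranspose_apply, hsymm]
  · intro y
    rw [quad_expand]; exact hq y

lemma herm_symm {N : ℕ} {B : Matrix (Fin N) (Fin N) ℝ} (hB : B.IsHermitian) :
    ∀ i j, B j i = B i j := by
  intro i j
  have := congrFun (congrFun hB i) j
  simpa [Matrix.conjTranspose_apply] using this

lemma schur_quad {N : ℕ} {A B : Matrix (Fin N) (Fin N) ℝ} (hA : A.PosSemidef)
    (hBq : ∀ y : Fin N → ℝ, 0 ≤ ∑ i, ∑ j, y i * B i j * y j)
    (x : Fin N → ℝ) : 0 ≤ ∑ i, ∑ j, x i * (A i j * B i j) * x j := by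
  obtain ⟨C, hC⟩ := Matrix.posSemidef_iff_eq_transpose_mul_self.mp hA
  have hAij : ∀ i j, A i j = ∑ k, C k i * C k j := by
    intro i j; rw [hC]; simp [Matrix.mul_apply, Matrix.conjTranspose_apply]
  have e1 : ∀ i j, x i * (A i j * B i j) * x j = ∑ k, (C k i * x i) * B i j * (C k j * x j) := by
    intro i j
    rw [hAij i j, Finset.sum_mul, Finset.mul_sum, Finset.sum_mul]
    exact Finset.sum_congr rfl fun k _ => by ring
  have key : ∑ i, ∑ j, x i * (A i j * B i j) * x j
      = ∑ k, ∑ i, ∑ j, (C k i * x i) * B i j * (C k j * x j) := by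
    simp_rw [e1]
    calc ∑ i : Fin N, ∑ j : Fin N, ∑ k : Fin N, (C k i * x i) * B i j * (C k j * x j)
        = ∑ i : Fin N, ∑ k : Fin N, ∑ j : Fin N, (C k i * x i) * B i j * (C k j * x j) :=
          Finset.sum_congr rfl fun i _ => Finset.sum_comm
      _ = ∑ k : Fin N, ∑ i : Fin N, ∑ j : Fin N, (C k i * x i) * B i j * (C k j * x j) :=
          Finset.sum_comm
  rw [key]
  exact Finset.sum_nonneg fun k _ => hBq fun i => C k i * x i

lemma psd_entry_sq_le {N : ℕ} {A : Matrix (Fin N) (Fin N) ℝ} (hA : A.PosSemidef) (i j : Fin N) :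
    A i j ^ 2 ≤ A i i * A j j := by
  obtain ⟨C, hC⟩ := Matrix.posSemidef_iff_eq_transpose_mul_self.mp hA
  have hAij : ∀ i j, A i j = ∑ k, C k i * C k j := by
    intro i j; rw [hC]; simp [Matrix.mul_apply, Matrix.conjTranspose_apply]
  rw [hAij i j, hAij i i, hAij j j]
  simpa [sq] using Finset.sum_mul_sq_le_sq_mul_sq Finset.univ (fun k => C k i) (fun k => C k j)

end RealSide
section FH

lemma cont_aff_rpow (y w β : ℝ) (hβ : 0 ≤ β) : Continuous fun t : ℝ => (y + t * w) ^ β := by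
  apply continuous_iff_continuousAt.mpr
  intro t
  exact (Real.continuousAt_rpow_const _ _ (Or.inr hβ)).comp (by fun_prop)

lemma rpow_integral_identity {x y α : ℝ} (hx : 0 ≤ x) (hy : 0 ≤ y) (hα : 1 ≤ α) :
    x ^ α = y ^ α + ∫ t in (0:ℝ)..1, (α * (x - y)) * (y + t * (x - y)) ^ (α - 1) := by
  have hderiv : ∀ t ∈ Set.uIcc (0:ℝ) 1,
      HasDerivAt (fun t : ℝ => (y + t * (x - y)) ^ α)
        ((α * (x - y)) * (y + t * (x - y)) ^ (α - 1)) t := by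
    intro t _
    have h1 : HasDerivAt (fun t : ℝ => y + t * (x - y)) (x - y) t := by
      simpa using ((hasDerivAt_id t).mul_const (x - y)).const_add y
    have h2 := Real.hasDerivAt_rpow_const (x := y + t * (x - y)) (p := α) (Or.inr hα)
    have h3 := HasDerivAt.comp t h2 h1
    rw [show (α * (x - y)) * (y + t * (x - y)) ^ (α - 1)
      = α * (y + t * (x - y)) ^ (α - 1) * (x - y) by ring]
    exact h3
  have hint : IntervalIntegrable
      (fun t : ℝ => (α * (x - y)) * (y + t * (x - y)) ^ (α - 1)) MeasureTheory.volume 0 1 :=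
    (continuous_const.mul (cont_aff_rpow y (x - y) (α - 1) (by linarith))).intervalIntegrable _ _
  rw [intervalIntegral.integral_eq_sub_of_hasDerivAt hderiv hint]
  have e1 : y + 1 * (x - y) = x := by ring
  have e0 : y + 0 * (x - y) = y := by ring
  simp only [e1, e0]
  ring

lemma quad_castSucc {n : ℕ} (M : Fin (n+1) → Fin (n+1) → ℝ)
    (h1 : ∀ i, M i (Fin.last n) = 0) (h2 : ∀ j, M (Fin.last n) j = 0) (u : Fin (n+1) → ℝ) :
    ∑ i, ∑ j, u i * M i j * u j
      = ∑ i : Fin n, ∑ j : Fin n, u i.castSucc * M i.castSucc j.castSucc * u j.castSucc := by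
  rw [Fin.sum_univ_castSucc (f := fun i => ∑ j, u i * M i j * u j)]
  have e : ∀ i : Fin (n+1), ∑ j, u i * M i j * u j
      = ∑ j : Fin n, u i * M i j.castSucc * u j.castSucc := by
    intro i
    rw [Fin.sum_univ_castSucc (f := fun j => u i * M i j * u j)]
    simp [h1]
  simp only [e, h2, zero_mul, mul_zero, Finset.sum_const_zero, add_zero]

lemma quad_update_last {n : ℕ} (M : Fin (n+1) → Fin (n+1) → ℝ)
    (h1 : ∀ i, M i (Fin.last n) = 0) (h2 : ∀ j, M (Fin.last n) j = 0)
    (u : Fin (n+1) → ℝ) (v : ℝ) :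
    ∑ i, ∑ j, Function.update u (Fin.last n) v i * M i j * Function.update u (Fin.last n) v j
      = ∑ i, ∑ j, u i * M i j * u j := by
  rw [quad_castSucc M h1 h2, quad_castSucc M h1 h2]
  refine Finset.sum_congr rfl fun i _ => Finset.sum_congr rfl fun j _ => ?_
  rw [Function.update_of_ne (Fin.castSucc_lt_last i).ne, Function.update_of_ne (Fin.castSucc_lt_last j).ne]

lemma sum_zz_sq {N : ℕ} (z u : Fin N → ℝ) :
    ∑ i, ∑ j, u i * (z i * z j) * u j = (∑ i, z i * u i) ^ 2 := by
  rw [sq, Finset.sum_mul_sum]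
  exact Finset.sum_congr rfl fun i _ => Finset.sum_congr rfl fun j _ => by ring

end FH
section FHcore

lemma base1 {A : Matrix (Fin 1) (Fin 1) ℝ} (hA : A.PosSemidef) (h0 : ∀ i j, 0 ≤ A i j)
    {α : ℝ} : (Matrix.of fun i j => A i j ^ α).PosSemidef := by
  apply posSemidef_of_quad
  · intro i j; rw [Subsingleton.elim i j]
  · intro y
    simp only [Fin.sum_univ_one, Matrix.of_apply]
    have := Real.rpow_nonneg (h0 0 0) α
    nlinarith [sq_nonneg (y 0)]

lemma base2 {A : Matrix (Fin 2) (Fin 2) ℝ} (hA : A.PosSemidef) (h0 : ∀ i j, 0 ≤ A i j)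
    {α : ℝ} (hα : 0 < α) : (Matrix.of fun i j => A i j ^ α).PosSemidef := by
  have hsym := herm_symm hA.1
  apply posSemidef_of_quad
  · intro i j; simp only [Matrix.of_apply, hsym i j]
  · intro y
    have ha := Real.rpow_nonneg (h0 0 0) α
    have hb := Real.rpow_nonneg (h0 0 1) α
    have hc := Real.rpow_nonneg (h0 1 1) α
    have hkey : A 0 1 ^ α * A 0 1 ^ α ≤ A 0 0 ^ α * A 1 1 ^ α := by
      rw [← Real.mul_rpow (h0 0 1) (h0 0 1), ← Real.mul_rpow (h0 0 0) (h0 1 1)]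
      apply Real.rpow_le_rpow (mul_nonneg (h0 0 1) (h0 0 1)) ?_ hα.le
      nlinarith [psd_entry_sq_le hA 0 1]
    have h10 : A 1 0 = A 0 1 := hsym 0 1
    simp only [Fin.sum_univ_two, Matrix.of_apply, h10]
    rcases eq_or_lt_of_le ha with hzero | hpos
    · have hb2 : A 0 1 ^ α * A 0 1 ^ α ≤ 0 := by nlinarith
      have hb0 : A 0 1 ^ α = 0 :=
        mul_self_eq_zero.mp (le_antisymm hb2 (mul_self_nonneg _))
      rw [hb0, ← hzero]
      nlinarith [sq_nonneg (y 1)]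
    · nlinarith [sq_nonneg (A 0 0 ^ α * y 0 + A 0 1 ^ α * y 1),
        mul_nonneg (sub_nonneg.mpr hkey) (sq_nonneg (y 1))]

lemma hadPow_nat_psd {N : ℕ} {A : Matrix (Fin N) (Fin N) ℝ} (hA : A.PosSemidef) :
    ∀ k : ℕ, 1 ≤ k → (Matrix.of fun i j => A i j ^ k).PosSemidef := by
  intro k hk
  induction k with
  | zero => omega
  | succ k ih =>
    have hsym := herm_symm hA.1
    rcases Nat.eq_zero_or_pos k with h0 | h1
    · subst h0
      have : (Matrix.of fun i j => A i j ^ 1) = A := by ext i j; simp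
      rw [this]; exact hA
    · have hk' := ih h1
      apply posSemidef_of_quad
      · intro i j; simp [hsym i j]
      · intro y
        have hq := schur_quad hk' (quad_nonneg hA) y
        refine le_of_le_of_eq hq (Finset.sum_congr rfl fun i _ => Finset.sum_congr rfl fun j _ => ?_)
        show y i * (A i j ^ k * A i j) * y j = y i * A i j ^ (k+1) * y j
        rw [pow_succ]

lemma FH_step {n : ℕ} {A : Matrix (Fin (n+1)) (Fin (n+1)) ℝ}
    (hA : A.PosSemidef) (h0 : ∀ i j, 0 ≤ A i j) {α : ℝ} (hα1 : 1 < α)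
    (hind : ∀ (B : Matrix (Fin n) (Fin n) ℝ), B.PosSemidef → (∀ i j, 0 ≤ B i j) →
      (Matrix.of fun i j => B i j ^ (α-1)).PosSemidef)
    (z : Fin (n+1) → ℝ) (hz : ∀ i, 0 ≤ z i)
    (hzA : ∀ i, A i (Fin.last n) = z i * z (Fin.last n))
    (hWq : ∀ u : Fin (n+1) → ℝ, 0 ≤ ∑ i, ∑ j, u i * (A i j - z i * z j) * u j) :
    (Matrix.of fun i j => A i j ^ α).PosSemidef := by
  have hsym := herm_symm hA.1
  have hWlast1 : ∀ i, A i (Fin.last n) - z i * z (Fin.last n) = 0 := fun i => by rw [hzA i]; ring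
  have hWlast2 : ∀ j, A (Fin.last n) j - z (Fin.last n) * z j = 0 := fun j => by
    rw [hsym j (Fin.last n), hzA j]; ring
  -- the path matrices
  have hMt_psd : ∀ t : ℝ, 0 ≤ t → t ≤ 1 →
      (Matrix.of fun i j => z i * z j + t * (A i j - z i * z j)).PosSemidef := by
    intro t ht0 ht1
    apply posSemidef_of_quad
    · intro i j; simp only [Matrix.of_apply, hsym i j]; ring
    · intro u
      have e1 := sum_zz_sq z u
      have eA := quad_nonneg hA u
      have h : ∀ i j : Fin (n+1), u i * (Matrix.of (fun i j => z i * z j + t * (A i j - z i * z j)) i j) * u j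
          = u i * (z i * z j) * u j + t * (u i * A i j * u j) - t * (u i * (z i * z j) * u j) := by
        intro i j; simp only [Matrix.of_apply]; ring
      simp_rw [h, Finset.sum_sub_distrib, Finset.sum_add_distrib, ← Finset.mul_sum]
      rw [e1]
      nlinarith [sq_nonneg (∑ i, z i * u i)]
  have hMt0 : ∀ t : ℝ, 0 ≤ t → t ≤ 1 → ∀ i j, 0 ≤ z i * z j + t * (A i j - z i * z j) := by
    intro t ht0 ht1 i j
    nlinarith [mul_nonneg (sub_nonneg.mpr ht1) (mul_nonneg (hz i) (hz j)),
      mul_nonneg ht0 (h0 i j)]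
  -- restricted W quadratic form
  have hWq' : ∀ y : Fin n → ℝ, 0 ≤ ∑ i : Fin n, ∑ j : Fin n,
      y i * (A i.castSucc j.castSucc - z i.castSucc * z j.castSucc) * y j := by
    intro y
    have h' := hWq (Fin.snoc y 0)
    rw [quad_castSucc (fun i j => A i j - z i * z j) hWlast1 hWlast2 (Fin.snoc y 0)] at h'
    simpa [Fin.snoc_castSucc] using h'
  -- rpow of restricted path matrices
  have hC : ∀ t : ℝ, 0 ≤ t → t ≤ 1 → (Matrix.of fun i j : Fin n =>
      (z i.castSucc * z j.castSucc
        + t * (A i.castSucc j.castSucc - z i.castSucc * z j.castSucc)) ^ (α-1)).PosSemidef := by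
    intro t ht0 ht1
    have hsub := Matrix.PosSemidef.submatrix (hMt_psd t ht0 ht1) (Fin.castSucc (n := n))
    exact hind _ hsub (fun i j => hMt0 t ht0 ht1 _ _)
  -- main quadratic form estimate
  apply posSemidef_of_quad
  · intro i j; simp only [Matrix.of_apply, hsym i j]
  · intro u
    have key : ∀ i j : Fin (n+1), A i j ^ α = (z i * z j) ^ α
        + ∫ t in (0:ℝ)..1, (α * (A i j - z i * z j))
            * (z i * z j + t * (A i j - z i * z j)) ^ (α - 1) :=
      fun i j => rpow_integral_identity (h0 i j) (mul_nonneg (hz i) (hz j)) hα1.le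
    have h : ∀ i j : Fin (n+1), u i * (Matrix.of (fun i j => A i j ^ α) i j) * u j
        = u i * ((z i ^ α) * (z j ^ α)) * u j
          + u i * (∫ t in (0:ℝ)..1, (α * (A i j - z i * z j))
              * (z i * z j + t * (A i j - z i * z j)) ^ (α - 1)) * u j := by
      intro i j
      simp only [Matrix.of_apply]
      rw [key i j, ← Real.mul_rpow (hz i) (hz j)]
      ring
    simp_rw [h, Finset.sum_add_distrib]
    have first : 0 ≤ ∑ i, ∑ j, u i * ((z i ^ α) * (z j ^ α)) * u j := by
      rw [sum_zz_sq (fun i => z i ^ α) u]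
      exact sq_nonneg _
    have second : 0 ≤ ∑ i, ∑ j, u i * (∫ t in (0:ℝ)..1, (α * (A i j - z i * z j))
        * (z i * z j + t * (A i j - z i * z j)) ^ (α - 1)) * u j := by
      have hmove : ∀ i j : Fin (n+1), u i * (∫ t in (0:ℝ)..1, (α * (A i j - z i * z j))
            * (z i * z j + t * (A i j - z i * z j)) ^ (α - 1)) * u j
          = ∫ t in (0:ℝ)..1, u i * ((α * (A i j - z i * z j))
            * (z i * z j + t * (A i j - z i * z j)) ^ (α - 1)) * u j := by
        intro i j
        rw [← intervalIntegral.integral_const_mul, ← intervalIntegral.integral_mul_const]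
      simp_rw [hmove]
      have hcont : ∀ p : Fin (n+1) × Fin (n+1), Continuous fun t : ℝ =>
          u p.1 * ((α * (A p.1 p.2 - z p.1 * z p.2))
            * (z p.1 * z p.2 + t * (A p.1 p.2 - z p.1 * z p.2)) ^ (α - 1)) * u p.2 := by
        intro p
        exact (continuous_const.mul (continuous_const.mul
          (cont_aff_rpow _ _ _ (by linarith)))).mul continuous_const
      rw [← Fintype.sum_prod_type (f := fun p : Fin (n+1) × Fin (n+1) =>
        ∫ t in (0:ℝ)..1, u p.1 * ((α * (A p.1 p.2 - z p.1 * z p.2))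
          * (z p.1 * z p.2 + t * (A p.1 p.2 - z p.1 * z p.2)) ^ (α - 1)) * u p.2)]
      rw [← intervalIntegral.integral_finset_sum
        (fun p _ => ((hcont p).intervalIntegrable 0 1))]
      apply intervalIntegral.integral_nonneg (by norm_num)
      intro t ht
      obtain ⟨ht0, ht1⟩ := ht
      rw [Fintype.sum_prod_type]
      have e2 : ∀ i j : Fin (n+1), u i * ((α * (A i j - z i * z j))
            * (z i * z j + t * (A i j - z i * z j)) ^ (α - 1)) * u j
          = α * (u i * ((z i * z j + t * (A i j - z i * z j)) ^ (α - 1)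
              * (A i j - z i * z j)) * u j) := by
        intro i j; ring
      simp_rw [e2, ← Finset.mul_sum]
      apply mul_nonneg (by linarith)
      have z1 : ∀ i, (z i * z (Fin.last n) + t * (A i (Fin.last n) - z i * z (Fin.last n))) ^ (α - 1)
          * (A i (Fin.last n) - z i * z (Fin.last n)) = 0 := by
        intro i; rw [hWlast1 i, mul_zero]
      have z2 : ∀ j, (z (Fin.last n) * z j + t * (A (Fin.last n) j - z (Fin.last n) * z j)) ^ (α - 1)
          * (A (Fin.last n) j - z (Fin.last n) * z j) = 0 := by
        intro j; rw [hWlast2 j, mul_zero]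
      rw [quad_castSucc (fun i j => (z i * z j + t * (A i j - z i * z j)) ^ (α - 1)
          * (A i j - z i * z j)) z1 z2 u]
      exact schur_quad (hC t ht0 ht1) hWq' (fun i => u i.castSucc)
    exact add_nonneg first second

end FHcore
section FHwrap

lemma FH_real : ∀ (N : ℕ) (A : Matrix (Fin N) (Fin N) ℝ), A.PosSemidef → (∀ i j, 0 ≤ A i j) →
    ∀ α : ℝ, 0 < α → (N : ℝ) - 2 ≤ α → (Matrix.of fun i j => A i j ^ α).PosSemidef := by
  intro N
  induction N with
  | zero =>
    intro A hA h0 α hα hge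
    refine Matrix.PosSemidef.of_dotProduct_mulVec_nonneg ?_ ?_
    · ext i j; exact i.elim0
    · intro y; simp [dotProduct]
  | succ n ih =>
    intro A hA h0 α hα hge
    rcases Nat.lt_or_ge n 2 with hn | hn
    · interval_cases n
      · exact base1 hA h0
      · exact base2 hA h0 hα
    · by_cases hαone : α = 1
      · subst hαone
        have e : (Matrix.of fun i j => A i j ^ (1:ℝ)) = A := by
          ext i j; simp [Real.rpow_one]
        rw [e]; exact hA
      · have hn2 : (2:ℝ) ≤ (n:ℝ) := by exact_mod_cast hn
        have hcast : ((n+1 : ℕ) : ℝ) = (n:ℝ) + 1 := by push_cast; ring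
        have hα1 : 1 ≤ α := by rw [hcast] at hge; linarith
        have hα1' : 1 < α := lt_of_le_of_ne hα1 (Ne.symm hαone)
        have hind : ∀ (B : Matrix (Fin n) (Fin n) ℝ), B.PosSemidef → (∀ i j, 0 ≤ B i j) →
            (Matrix.of fun i j => B i j ^ (α-1)).PosSemidef := by
          intro B hB h0B
          exact ih B hB h0B (α-1) (by linarith) (by rw [hcast] at hge; linarith)
        have hsym := herm_symm hA.1
        by_cases hcz : A (Fin.last n) (Fin.last n) = 0
        · refine FH_step hA h0 hα1' hind (fun _ => 0) (fun i => le_refl 0) ?_ ?_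
          · intro i
            have h2 := psd_entry_sq_le hA i (Fin.last n)
            rw [hcz, mul_zero] at h2
            have h3 : A i (Fin.last n) ^ 2 = 0 := le_antisymm h2 (sq_nonneg _)
            have h4 := pow_eq_zero_iff (n := 2) (by norm_num) |>.mp h3
            rw [h4]; ring
          · intro u
            have h5 := quad_nonneg hA u
            refine le_of_le_of_eq h5 (Finset.sum_congr rfl fun i _ =>
              Finset.sum_congr rfl fun j _ => by ring)
        · have hcpos : 0 < A (Fin.last n) (Fin.last n) := lt_of_le_of_ne (h0 _ _) (Ne.symm hcz)
          set c := A (Fin.last n) (Fin.last n) with hc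
          set z : Fin (n+1) → ℝ := fun i => A i (Fin.last n) / Real.sqrt c with hzdef
          have hsqpos : 0 < Real.sqrt c := Real.sqrt_pos.mpr hcpos
          have hzl : z (Fin.last n) = Real.sqrt c := by
            rw [hzdef]; exact Real.div_sqrt
          have hzA : ∀ i, A i (Fin.last n) = z i * z (Fin.last n) := by
            intro i
            rw [hzl, hzdef]
            exact (div_mul_cancel₀ _ hsqpos.ne').symm
          have hz : ∀ i, 0 ≤ z i := fun i => div_nonneg (h0 _ _) hsqpos.le
          have hWidentity : ∀ u : Fin (n+1) → ℝ, ∑ i, ∑ j, u i * (A i j - z i * z j) * u j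
              = (∑ i, ∑ j, u i * A i j * u j) - (∑ i, z i * u i)^2 := by
            intro u
            have h : ∀ i j, u i * (A i j - z i * z j) * u j
                = u i * A i j * u j - u i * (z i * z j) * u j := by intro i j; ring
            simp_rw [h, Finset.sum_sub_distrib]
            rw [sum_zz_sq z u]
          have hWl1 : ∀ i, A i (Fin.last n) - z i * z (Fin.last n) = 0 := fun i => by
            rw [hzA i]; ring
          have hWl2 : ∀ j, A (Fin.last n) j - z (Fin.last n) * z j = 0 := fun j => by
            rw [hsym j (Fin.last n), hzA j]; ring
          have hWq : ∀ u : Fin (n+1) → ℝ,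
              0 ≤ ∑ i, ∑ j, u i * (A i j - z i * z j) * u j := by
            intro u
            set w := u (Fin.last n) - (∑ i, z i * u i) / Real.sqrt c with hw
            have hupd := quad_update_last (fun i j => A i j - z i * z j) hWl1 hWl2 u w
            rw [← hupd]
            rw [hWidentity (Function.update u (Fin.last n) w)]
            have hsplit : ∀ v : Fin (n+1) → ℝ, ∑ i, z i * v i
                = (∑ i : Fin n, z i.castSucc * v i.castSucc)
                  + z (Fin.last n) * v (Fin.last n) := fun v => Fin.sum_univ_castSucc _
            have hcs : ∀ i : Fin n, Function.update u (Fin.last n) w i.castSucc = u i.castSucc :=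
              fun i => Function.update_of_ne (Fin.castSucc_lt_last i).ne _ _
            have hzv : ∑ i, z i * Function.update u (Fin.last n) w i = 0 := by
              rw [hsplit]
              simp only [hcs, Function.update_self]
              have e6 : (∑ i : Fin n, z i.castSucc * u i.castSucc)
                  = (∑ i, z i * u i) - z (Fin.last n) * u (Fin.last n) := by
                rw [hsplit u]; ring
              rw [e6, hzl, hw]
              field_simp
              ring
            rw [hzv]
            simpa using quad_nonneg hA (Function.update u (Fin.last n) w)
          exact FH_step hA h0 hα1' hind z hz hzA hWq

lemma FHmain {N : ℕ} {A : Matrix (Fin N) (Fin N) ℝ} (hA : A.PosSemidef) (h0 : ∀ i j, 0 ≤ A i j)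
    {α : ℝ} (hα : 0 < α) (hmem : (∃ k : ℕ, 1 ≤ k ∧ α = (k:ℝ)) ∨ (N : ℝ) - 2 ≤ α) :
    (Matrix.of fun i j => A i j ^ α).PosSemidef := by
  rcases hmem with ⟨k, hk1, hk⟩ | hge
  · subst hk
    have h := hadPow_nat_psd hA k hk1
    have e : (Matrix.of fun i j => A i j ^ ((k:ℕ):ℝ)) = Matrix.of fun i j => A i j ^ k := by
      ext i j; simp [Real.rpow_natCast]
    rw [e]; exact h
  · exact FH_real N A hA h0 α hα hge

end FHwrap
open Matrix

section ComplexSide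

lemma posSemidef_map_ofReal {N : ℕ} {M : Matrix (Fin N) (Fin N) ℝ} (hM : M.PosSemidef) :
    (M.map (fun r => (r : ℂ))).PosSemidef := by
  obtain ⟨B, hB⟩ := Matrix.posSemidef_iff_eq_transpose_mul_self.mp hM
  have key : M.map (fun r => (r : ℂ))
      = (B.map fun r => (r : ℂ))ᴴ * (B.map fun r => (r : ℂ)) := by
    rw [hB]
    ext i j
    simp only [Matrix.map_apply, Matrix.mul_apply, Matrix.conjTranspose_apply, star_trivial,
      Complex.ofReal_sum, Complex.ofReal_mul, Pi.star_apply]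
    exact Finset.sum_congr rfl fun k _ => by
      rw [Complex.star_def, Complex.conj_ofReal]
  rw [key]
  exact Matrix.posSemidef_conjTranspose_mul_self _

lemma dot_self_real {N : ℕ} (v : Fin N → ℂ) :
    dotProduct (star v) v = ((∑ i, Complex.normSq (v i) : ℝ) : ℂ) := by
  rw [Complex.ofReal_sum]
  unfold dotProduct
  exact Finset.sum_congr rfl fun i _ => by
    rw [Pi.star_apply, Complex.star_def, mul_comm, Complex.mul_conj]

lemma eig_real_nonneg {N : ℕ} {B : Matrix (Fin N) (Fin N) ℂ} (hB : B.PosSemidef)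
    {v : Fin N → ℂ} (hv0 : v ≠ 0) {μ : ℂ} (hμ : B *ᵥ v = μ • v) :
    μ = ((μ.re : ℝ) : ℂ) ∧ 0 ≤ μ.re := by
  set r : ℝ := ∑ i, Complex.normSq (v i) with hr
  have hrpos : 0 < r := by
    obtain ⟨i, hi⟩ := Function.ne_iff.mp hv0
    exact Finset.sum_pos' (fun i _ => Complex.normSq_nonneg _)
      ⟨i, Finset.mem_univ i, Complex.normSq_pos.mpr hi⟩
  have h2 := hB.dotProduct_mulVec_nonneg v
  rw [hμ, dotProduct_smul, smul_eq_mul, dot_self_real, ← hr] at h2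
  rw [Complex.le_def] at h2
  obtain ⟨hre, him⟩ := h2
  simp only [Complex.zero_re, Complex.zero_im, Complex.mul_re, Complex.mul_im,
    Complex.ofReal_re, Complex.ofReal_im, mul_zero, zero_mul, sub_zero, add_zero,
    zero_add] at hre him
  have hμim : μ.im = 0 := by
    rcases mul_eq_zero.mp him.symm with h | h
    · exact h
    · exact absurd h hrpos.ne'
  have hμre : 0 ≤ μ.re := by nlinarith
  exact ⟨Complex.ext (by simp) (by simp [hμim]), hμre⟩

lemma eig_orth {N : ℕ} {B : Matrix (Fin N) (Fin N) ℂ} (hB : B.IsHermitian)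
    {u w : Fin N → ℂ} {μ ν : ℝ} (hu : B *ᵥ u = (μ:ℂ) • u) (hw : B *ᵥ w = (ν:ℂ) • w)
    (hne : μ ≠ ν) : dotProduct (star u) w = 0 := by
  have h1 : dotProduct (star u) (B *ᵥ w) = (ν:ℂ) * dotProduct (star u) w := by
    rw [hw, dotProduct_smul, smul_eq_mul]
  have h2 : dotProduct (star u) (B *ᵥ w) = (μ:ℂ) * dotProduct (star u) w := by
    rw [dotProduct_mulVec]
    have e : Matrix.vecMul (star u) B = star (B *ᵥ u) := by
      rw [Matrix.star_mulVec, hB]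
    rw [e, hu, star_smul, Complex.star_def, Complex.conj_ofReal, smul_dotProduct,
      smul_eq_mul]
  have h3 : ((ν:ℂ) - (μ:ℂ)) * dotProduct (star u) w = 0 := by
    linear_combination h1.symm.trans h2
  have hνμ : (ν:ℂ) - (μ:ℂ) ≠ 0 := sub_ne_zero.mpr (by exact_mod_cast hne.symm)
  exact (mul_eq_zero.mp h3).resolve_left hνμ

lemma hermFun_isHermitian {m : ℕ} (f : ℝ → ℂ) (hf : ∀ x, star (f x) = f x)
    (B : Matrix (Fin m) (Fin m) ℂ) : (hermFun f B).IsHermitian := by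
  unfold hermFun
  split_ifs with hB
  · have hsf : (star fun i => f (hB.eigenvalues i)) = fun i => f (hB.eigenvalues i) :=
      funext fun i => hf _
    have hD : (Matrix.diagonal fun i => f (hB.eigenvalues i)).IsHermitian := by
      rw [Matrix.IsHermitian, Matrix.diagonal_conjTranspose, hsf]
    have := Matrix.isHermitian_mul_mul_conjTranspose
      (hB.eigenvectorUnitary : Matrix (Fin m) (Fin m) ℂ) hD
    rwa [Matrix.star_eq_conjTranspose]
  · exact Matrix.isHermitian_zero

lemma hermFun_mulVec {m : ℕ} {B : Matrix (Fin m) (Fin m) ℂ} (hB : B.IsHermitian) (f : ℝ → ℂ)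
    {μ : ℝ} {v : Fin m → ℂ} (hv : B *ᵥ v = (μ:ℂ) • v) :
    hermFun f B *ᵥ v = f μ • v := by
  unfold hermFun
  rw [dif_pos hB]
  set U : Matrix (Fin m) (Fin m) ℂ := (hB.eigenvectorUnitary : Matrix (Fin m) (Fin m) ℂ) with hU
  have hUU' : U * star U = 1 := Matrix.mem_unitaryGroup_iff.mp hB.eigenvectorUnitary.2
  set w := star U *ᵥ v with hwdef
  have hvw : U *ᵥ w = v := by
    rw [hwdef, Matrix.mulVec_mulVec, hUU', Matrix.one_mulVec]
  have hD : star U * B * U = Matrix.diagonal (RCLike.ofReal ∘ hB.eigenvalues) := by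
    have := hB.conjStarAlgAut_star_eigenvectorUnitary
    rwa [Unitary.conjStarAlgAut_star_apply] at this
  have h1 : Matrix.diagonal (RCLike.ofReal ∘ hB.eigenvalues) *ᵥ w = (μ:ℂ) • w := by
    rw [← hD, hwdef, Matrix.mulVec_mulVec, Matrix.mul_assoc (star U * B) U (star U), hUU',
      Matrix.mul_one, ← Matrix.mulVec_mulVec, hv, Matrix.mulVec_smul]
  have hDw : ∀ i, (hB.eigenvalues i : ℂ) * w i = (μ:ℂ) * w i := by
    intro i
    have := congrFun h1 i
    rw [Matrix.mulVec_diagonal] at this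
    simpa using this
  have hfw : ∀ i, f (hB.eigenvalues i) * w i = f μ * w i := by
    intro i
    by_cases h : w i = 0
    · rw [h, mul_zero, mul_zero]
    · have h5 := hDw i
      have h6 : (hB.eigenvalues i : ℂ) = (μ:ℂ) := mul_right_cancel₀ h h5
      have h7 : hB.eigenvalues i = μ := by exact_mod_cast h6
      rw [h7]
  have hDfw : Matrix.diagonal (fun i => f (hB.eigenvalues i)) *ᵥ w = f μ • w := by
    funext i
    rw [Matrix.mulVec_diagonal]
    rw [hfw i]
    simp
  calc (U * Matrix.diagonal (fun i => f (hB.eigenvalues i)) * star U) *ᵥ v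
      = U *ᵥ (Matrix.diagonal (fun i => f (hB.eigenvalues i)) *ᵥ (star U *ᵥ v)) := by
        rw [Matrix.mulVec_mulVec, Matrix.mulVec_mulVec]
    _ = U *ᵥ (f μ • w) := by rw [← hwdef, hDfw]
    _ = f μ • (U *ᵥ w) := Matrix.mulVec_smul _ _ _
    _ = f μ • v := by rw [hvw]

lemma schur_quadC {N : ℕ} {M : Matrix (Fin N) (Fin N) ℂ} (hM : M.PosSemidef)
    {G : Matrix (Fin N) (Fin N) ℂ}
    (hG : ∀ y : Fin N → ℂ, 0 ≤ dotProduct (star y) (G *ᵥ y)) :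
    0 ≤ ∑ s, ∑ t, M s t * G s t := by
  obtain ⟨B, hB⟩ := Matrix.posSemidef_iff_eq_transpose_mul_self.mp hM
  have hMst : ∀ s t, M s t = ∑ k, star (B k s) * B k t := by
    intro s t; rw [hB]; simp [Matrix.mul_apply, Matrix.conjTranspose_apply]
  have e1 : ∀ s t, M s t * G s t = ∑ k, star (B k s) * G s t * B k t := by
    intro s t
    rw [hMst s t, Finset.sum_mul]
    exact Finset.sum_congr rfl fun k _ => by ring
  have key : ∑ s, ∑ t, M s t * G s t = ∑ k, ∑ s, ∑ t, star (B k s) * G s t * B k t := by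
    simp_rw [e1]
    calc ∑ s : Fin N, ∑ t : Fin N, ∑ k : Fin N, star (B k s) * G s t * B k t
        = ∑ s : Fin N, ∑ k : Fin N, ∑ t : Fin N, star (B k s) * G s t * B k t :=
          Finset.sum_congr rfl fun s _ => Finset.sum_comm
      _ = ∑ k : Fin N, ∑ s : Fin N, ∑ t : Fin N, star (B k s) * G s t * B k t :=
          Finset.sum_comm
  rw [key]
  apply Finset.sum_nonneg
  intro k _
  refine le_of_le_of_eq (hG fun t => B k t) ?_
  simp [dotProduct, Matrix.mulVec, Finset.mul_sum, mul_assoc]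

lemma gram_quad {N m : ℕ} (g : Fin N → Fin m → ℂ) (y : Fin N → ℂ) :
    0 ≤ ∑ s, ∑ t, star (y s) * dotProduct (star (g s)) (g t) * y t := by
  have lhs : ∀ s t, star (y s) * dotProduct (star (g s)) (g t) * y t
      = ∑ i, star (y s) * (star (g s i) * g t i) * y t := by
    intro s t
    simp only [dotProduct, Pi.star_apply]
    rw [Finset.mul_sum, Finset.sum_mul]
  have rhs : dotProduct (star fun i => ∑ s, y s * g s i) (fun i => ∑ s, y s * g s i)
      = ∑ i, ∑ s, ∑ t, star (y s) * (star (g s i) * g t i) * y t := by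
    unfold dotProduct
    refine Finset.sum_congr rfl fun i _ => ?_
    rw [Pi.star_apply, star_sum, Finset.sum_mul_sum]
    refine Finset.sum_congr rfl fun s _ => Finset.sum_congr rfl fun t _ => ?_
    rw [star_mul']
    ring
  have key : ∑ s, ∑ t, star (y s) * dotProduct (star (g s)) (g t) * y t
      = dotProduct (star fun i => ∑ s, y s * g s i) (fun i => ∑ s, y s * g s i) := by
    rw [rhs]
    simp_rw [lhs]
    calc ∑ s : Fin N, ∑ t : Fin N, ∑ i : Fin m, star (y s) * (star (g s i) * g t i) * y t
        = ∑ s : Fin N, ∑ i : Fin m, ∑ t : Fin N, star (y s) * (star (g s i) * g t i) * y t :=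
          Finset.sum_congr rfl fun s _ => Finset.sum_comm
      _ = ∑ i : Fin m, ∑ s : Fin N, ∑ t : Fin N, star (y s) * (star (g s i) * g t i) * y t :=
          Finset.sum_comm
  rw [key]
  exact dotProduct_star_self_nonneg _

end ComplexSide
section Assembly

lemma mulVec_sum' {N : ℕ} {ι : Type*} (M : Matrix (Fin N) (Fin N) ℂ) (s : Finset ι)
    (f : ι → Fin N → ℂ) : M *ᵥ (∑ i ∈ s, f i) = ∑ i ∈ s, M *ᵥ f i := by
  funext i
  simp only [Matrix.mulVec, dotProduct, Finset.sum_apply, Finset.mul_sum]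
  exact Finset.sum_comm

lemma sum_dotProduct' {N : ℕ} {ι : Type*} (s : Finset ι) (f : ι → Fin N → ℂ) (v : Fin N → ℂ) :
    dotProduct (∑ i ∈ s, f i) v = ∑ i ∈ s, dotProduct (f i) v := by
  unfold dotProduct
  simp_rw [Finset.sum_apply, Finset.sum_mul]
  exact Finset.sum_comm

lemma dotProduct_sum' {N : ℕ} {ι : Type*} (v : Fin N → ℂ) (s : Finset ι) (f : ι → Fin N → ℂ) :
    dotProduct v (∑ i ∈ s, f i) = ∑ i ∈ s, dotProduct v (f i) := by
  unfold dotProduct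
  simp_rw [Finset.sum_apply, Finset.mul_sum]
  exact Finset.sum_comm

lemma blockM_quad {m n : ℕ} (P : Fin n → Fin n → Matrix (Fin m) (Fin m) ℂ)
    (x : Fin n × Fin m → ℂ) :
    dotProduct (star x) ((blockM P) *ᵥ x)
      = ∑ s, ∑ t, dotProduct (star fun i => x (s, i)) ((P s t) *ᵥ fun j => x (t, j)) := by
  unfold blockM
  simp only [dotProduct, Matrix.mulVec, Pi.star_apply, Matrix.of_apply,
    Fintype.sum_prod_type, Finset.mul_sum]
  exact Finset.sum_congr rfl fun s _ => Finset.sum_comm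

lemma joint_decomp {m n : ℕ} (H : Fin n → Fin n → Matrix (Fin m) (Fin m) ℂ)
    (hherm : ∀ s t, (H s t).IsHermitian)
    (hcomm : ∀ s t s' t', Commute (H s t) (H s' t')) (v : Fin m → ℂ) :
    ∃ (S : Finset ((Fin n × Fin n) → ℂ)) (g : ((Fin n × Fin n) → ℂ) → (Fin m → ℂ)),
      (∀ χ (p : Fin n × Fin n), H p.1 p.2 *ᵥ g χ = χ p • g χ) ∧
      (∀ χ, χ ∉ S → g χ = 0) ∧ v = ∑ χ ∈ S, g χ := by
  classical
  set T : (Fin n × Fin n) → Module.End ℂ (EuclideanSpace ℂ (Fin m)) :=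
    fun p => Matrix.toEuclideanLin (H p.1 p.2) with hT
  have hTsym : ∀ p, (T p).IsSymmetric := fun p =>
    Matrix.isHermitian_iff_isSymmetric.mp (hherm p.1 p.2)
  have hTcomm : Pairwise (Function.onFun Commute T) := by
    intro p q _
    have h1 : ∀ (a b : Fin n × Fin n), T a * T b
        = Matrix.toEuclideanLin (H a.1 a.2 * H b.1 b.2) := by
      intro a b
      apply LinearMap.ext
      intro w
      apply (WithLp.equiv 2 (Fin m → ℂ)).injective
      show WithLp.equiv 2 (Fin m → ℂ)
        (Matrix.toEuclideanLin (H a.1 a.2) (Matrix.toEuclideanLin (H b.1 b.2) w)) = _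
      exact Matrix.mulVec_mulVec (WithLp.equiv 2 (Fin m → ℂ) w) (H a.1 a.2) (H b.1 b.2)
    show T p * T q = T q * T p
    rw [h1, h1, hcomm p.1 p.2 q.1 q.2]
  have htop := LinearMap.IsSymmetric.iSup_iInf_eq_top_of_commute hTsym hTcomm
  have hv : ((WithLp.equiv 2 (Fin m → ℂ)).symm v) ∈
      ⨆ χ : (Fin n × Fin n) → ℂ, ⨅ p, Module.End.eigenspace (T p) (χ p) := by
    rw [htop]; trivial
  obtain ⟨f, hf1, hf2⟩ := (Submodule.mem_iSup_iff_exists_finsupp _ _).mp hv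
  refine ⟨f.support, fun χ => WithLp.equiv 2 (Fin m → ℂ) (f χ), ?_, ?_, ?_⟩
  · intro χ p
    have h1 : T p (f χ) = χ p • f χ :=
      Module.End.mem_eigenspace_iff.mp ((Submodule.mem_iInf _).mp (hf1 χ) p)
    have h2 := congrArg (WithLp.equiv 2 (Fin m → ℂ)) h1
    simp only [hT] at h2
    exact h2
  · intro χ hχ
    show WithLp.equiv 2 (Fin m → ℂ) (f χ) = 0
    rw [Finsupp.notMem_support_iff.mp hχ]
    rfl
  · have h3 := congrArg (WithLp.equiv 2 (Fin m → ℂ)) hf2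
    rw [Finsupp.sum] at h3
    have h4 : WithLp.equiv 2 (Fin m → ℂ) (∑ χ ∈ f.support, f χ)
        = ∑ χ ∈ f.support, WithLp.equiv 2 (Fin m → ℂ) (f χ) := WithLp.ofLp_sum ..
    rw [h4] at h3
    rw [Equiv.apply_symm_apply] at h3
    exact h3.symm

end Assembly

lemma quad_expandC {N : ℕ} (B : Matrix (Fin N) (Fin N) ℂ) (y : Fin N → ℂ) :
    dotProduct (star y) (B *ᵥ y) = ∑ s, ∑ t, star (y s) * B s t * y t := by
  simp [dotProduct, Matrix.mulVec, Finset.mul_sum, mul_assoc]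


/-- Theorem 2, positive part: if `α > 0` lies in `ℕ ∪ [n-2, ∞)`, then the blockwise power
map preserves positivity on positive semidefinite block matrices with pairwise commuting
positive semidefinite `m × m` blocks. -/
theorem blockwise_power_commuting_psd (m n : ℕ) (hm : 2 ≤ m) (hn : 2 ≤ n)
    (α : ℝ) (hα : 0 < α)
    (hmem : (∃ k : ℕ, 1 ≤ k ∧ α = k) ∨ (n : ℝ) - 2 ≤ α)
    (H : Fin n → Fin n → Matrix (Fin m) (Fin m) ℂ)
    (hpsd : ∀ s t, (H s t).PosSemidef)
    (hcomm : ∀ s t s' t', Commute (H s t) (H s' t'))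
    (hblock : (blockM H).PosSemidef) :
    (blockM fun s t => hermPow α (H s t)).PosSemidef := by
  classical
  have hsymH : ∀ s t, H t s = H s t := by
    intro s t
    ext i j
    have h1 := congrFun (congrFun hblock.1 (s, i)) (t, j)
    rw [Matrix.conjTranspose_apply] at h1
    have h2 := congrFun (congrFun (hpsd t s).1 i) j
    rw [Matrix.conjTranspose_apply] at h2
    have h3 : blockM H (t, j) (s, i) = H t s j i := rfl
    have h4 : blockM H (s, i) (t, j) = H s t i j := rfl
    rw [h3, h4] at h1
    rw [← h2, h1]
  have hPherm : ∀ s t, (hermPow α (H s t)).IsHermitian := fun s t =>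
    hermFun_isHermitian _ (fun x => by rw [Complex.star_def, Complex.conj_ofReal]) _
  have hPsymm : ∀ s t, hermPow α (H t s) = hermPow α (H s t) := fun s t => by rw [hsymH]
  refine Matrix.PosSemidef.of_dotProduct_mulVec_nonneg ?_ ?_
  · ext p q
    rw [Matrix.conjTranspose_apply]
    show star (hermPow α (H q.1 p.1) q.2 p.2) = hermPow α (H p.1 q.1) p.2 q.2
    have h5 := congrFun (congrFun (hPherm q.1 p.1) p.2) q.2
    rw [Matrix.conjTranspose_apply] at h5
    rw [h5, hPsymm p.1 q.1]
  · intro x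
    rw [blockM_quad]
    have hdec := fun s : Fin n =>
      joint_decomp H (fun s t => (hpsd s t).1) hcomm (fun i => x (s, i))
    choose S g hg1 hg2 hg3 using hdec
    set 𝒮 : Finset ((Fin n × Fin n) → ℂ) := Finset.univ.biUnion S with h𝒮
    have hsub : ∀ s, S s ⊆ 𝒮 := fun s => Finset.subset_biUnion_of_mem S (Finset.mem_univ s)
    have hsum : ∀ s : Fin n, (fun i => x (s, i)) = ∑ χ ∈ 𝒮, g s χ := by
      intro s
      rw [hg3 s]
      exact Finset.sum_subset (hsub s) (fun χ _ hχ => hg2 s χ hχ)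
    have hfC : ∀ (χ : (Fin n × Fin n) → ℂ) (s t : Fin n), hermPow α (H s t) *ᵥ g t χ
        = ((fPow α ((χ (s, t)).re) : ℝ) : ℂ) • g t χ := by
      intro χ s t
      by_cases h : g t χ = 0
      · rw [h, Matrix.mulVec_zero, smul_zero]
      · have hreal := eig_real_nonneg (hpsd s t) h (hg1 t χ (s, t))
        have heig : H s t *ᵥ g t χ = (((χ (s, t)).re : ℝ) : ℂ) • g t χ := by
          have h9 := hg1 t χ (s, t)
          rwa [hreal.1] at h9
        exact hermFun_mulVec (hpsd s t).1 _ heig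
    have step1 : ∀ s t : Fin n,
        dotProduct (star fun i => x (s, i)) ((hermPow α (H s t)) *ᵥ fun j => x (t, j))
        = ∑ χ ∈ 𝒮, ((fPow α ((χ (s, t)).re) : ℝ) : ℂ)
            * dotProduct (star (g s χ)) (g t χ) := by
      intro s t
      rw [hsum t, mulVec_sum']
      simp_rw [hfC]
      rw [dotProduct_sum']
      refine Finset.sum_congr rfl fun χ hχ => ?_
      rw [dotProduct_smul, smul_eq_mul]
      congr 1
      rw [hsum s, star_sum, sum_dotProduct']
      refine Finset.sum_eq_single_of_mem χ hχ ?_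
      intro χ' hχ' hne
      by_cases h1 : g s χ' = 0
      · rw [h1]; simp
      by_cases h2 : g t χ = 0
      · rw [h2]; simp [dotProduct]
      obtain ⟨p0, hp0⟩ := Function.ne_iff.mp hne
      have hr1 := eig_real_nonneg (hpsd p0.1 p0.2) h1 (hg1 s χ' p0)
      have hr2 := eig_real_nonneg (hpsd p0.1 p0.2) h2 (hg1 t χ p0)
      have e1 : H p0.1 p0.2 *ᵥ g s χ' = (((χ' p0).re : ℝ) : ℂ) • g s χ' := by
        have h9 := hg1 s χ' p0
        rwa [hr1.1] at h9
      have e2 : H p0.1 p0.2 *ᵥ g t χ = (((χ p0).re : ℝ) : ℂ) • g t χ := by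
        have h9 := hg1 t χ p0
        rwa [hr2.1] at h9
      have hrene : (χ' p0).re ≠ (χ p0).re := by
        intro hcontra
        apply hp0
        rw [hr1.1, hr2.1, hcontra]
      exact eig_orth (hpsd p0.1 p0.2).1 e1 e2 hrene
    simp_rw [step1]
    have reorder : ∑ s : Fin n, ∑ t : Fin n, ∑ χ ∈ 𝒮, ((fPow α ((χ (s, t)).re) : ℝ) : ℂ)
          * dotProduct (star (g s χ)) (g t χ)
        = ∑ χ ∈ 𝒮, ∑ s : Fin n, ∑ t : Fin n, ((fPow α ((χ (s, t)).re) : ℝ) : ℂ)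
          * dotProduct (star (g s χ)) (g t χ) := by
      calc ∑ s : Fin n, ∑ t : Fin n, ∑ χ ∈ 𝒮, ((fPow α ((χ (s, t)).re) : ℝ) : ℂ)
            * dotProduct (star (g s χ)) (g t χ)
          = ∑ s : Fin n, ∑ χ ∈ 𝒮, ∑ t : Fin n, ((fPow α ((χ (s, t)).re) : ℝ) : ℂ)
            * dotProduct (star (g s χ)) (g t χ) :=
            Finset.sum_congr rfl fun s _ => Finset.sum_comm
        _ = ∑ χ ∈ 𝒮, ∑ s : Fin n, ∑ t : Fin n, ((fPow α ((χ (s, t)).re) : ℝ) : ℂ)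
            * dotProduct (star (g s χ)) (g t χ) := Finset.sum_comm
    rw [reorder]
    apply Finset.sum_nonneg
    intro χ hχ
    by_cases hall : ∀ s, g s χ = 0
    · have hz : (∑ s : Fin n, ∑ t : Fin n, ((fPow α ((χ (s, t)).re) : ℝ) : ℂ)
          * dotProduct (star (g s χ)) (g t χ)) = 0 :=
        Finset.sum_eq_zero fun s _ => Finset.sum_eq_zero fun t _ => by
          rw [hall s]; simp
      rw [hz]
    · push_neg at hall
      obtain ⟨s0, hs0⟩ := hall
      have hreal : ∀ p : Fin n × Fin n, χ p = (((χ p).re : ℝ) : ℂ) ∧ 0 ≤ (χ p).re :=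
        fun p => eig_real_nonneg (hpsd p.1 p.2) hs0 (hg1 s0 χ p)
      have hχsym : ∀ s t : Fin n, χ (t, s) = χ (s, t) := by
        intro s t
        have e1 := hg1 s0 χ (s, t)
        have e2 := hg1 s0 χ (t, s)
        have e3 : H t s *ᵥ g s0 χ = χ (t, s) • g s0 χ := e2
        rw [hsymH s t] at e3
        have h8 : (χ (s, t) - χ (t, s)) • g s0 χ = 0 := by
          rw [sub_smul, ← e1, ← e3, sub_self]
        rcases smul_eq_zero.mp h8 with h9 | h9
        · exact (sub_eq_zero.mp h9).symm
        · exact absurd h9 hs0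
      have hdsym : ∀ s t : Fin n, (Matrix.of fun s t : Fin n => (χ (s, t)).re) t s
          = (Matrix.of fun s t : Fin n => (χ (s, t)).re) s t := by
        intro s t
        simp only [Matrix.of_apply]
        rw [hχsym s t]
      have cc := dot_self_real (g s0 χ)
      set r : ℝ := ∑ i, Complex.normSq (g s0 χ i) with hr
      have hrpos : 0 < r := by
        obtain ⟨i, hi⟩ := Function.ne_iff.mp hs0
        exact Finset.sum_pos' (fun i _ => Complex.normSq_nonneg _)
          ⟨i, Finset.mem_univ i, Complex.normSq_pos.mpr hi⟩
      have hdq : ∀ y : Fin n → ℝ,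
          0 ≤ ∑ s, ∑ t, y s * (Matrix.of fun s t : Fin n => (χ (s, t)).re) s t * y t := by
        intro y
        set Y : Fin n × Fin m → ℂ := fun q => (y q.1 : ℂ) * g s0 χ q.2 with hY
        have hq := hblock.dotProduct_mulVec_nonneg Y
        rw [blockM_quad] at hq
        have hdot : ∀ s t : Fin n,
            dotProduct (star fun i => Y (s, i)) (H s t *ᵥ fun j => Y (t, j))
            = ((y s * (χ (s, t)).re * y t : ℝ) : ℂ) * ((r : ℝ) : ℂ) := by
          intro s t
          have hYt : (fun j => Y (t, j)) = ((y t : ℂ)) • g s0 χ := by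
            funext j
            rw [hY]
            simp
          have hYs : (fun i => Y (s, i)) = ((y s : ℂ)) • g s0 χ := by
            funext i
            rw [hY]
            simp
          have heig : H s t *ᵥ g s0 χ = (((χ (s, t)).re : ℝ) : ℂ) • g s0 χ := by
            have h9 := hg1 s0 χ (s, t)
            rwa [(hreal (s, t)).1] at h9
          rw [hYs, hYt, Matrix.mulVec_smul, heig, star_smul, smul_dotProduct,
            dotProduct_smul, dotProduct_smul, cc]
          simp only [smul_eq_mul, Complex.star_def, Complex.conj_ofReal]
          push_cast
          ring
        simp_rw [hdot] at hq
        have e8 : ∑ s : Fin n, ∑ t : Fin n, ((y s * (χ (s, t)).re * y t : ℝ) : ℂ) * ((r:ℝ):ℂ)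
            = (((∑ s, ∑ t, y s * (χ (s, t)).re * y t) * r : ℝ) : ℂ) := by
          push_cast
          rw [Finset.sum_mul]
          refine Finset.sum_congr rfl fun s _ => ?_
          rw [Finset.sum_mul]
        rw [e8] at hq
        have h10 := Complex.zero_le_real.mp hq
        have h11 : 0 ≤ ∑ s, ∑ t, y s * (χ (s, t)).re * y t := by nlinarith
        exact h11
      have hdpsd := posSemidef_of_quad hdsym hdq
      have hd0 : ∀ s t : Fin n, 0 ≤ (Matrix.of fun s t : Fin n => (χ (s, t)).re) s t :=
        fun s t => (hreal (s, t)).2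
      have hFH := FHmain hdpsd hd0 hα hmem
      have hM := posSemidef_map_ofReal hFH
      have hGq : ∀ y : Fin n → ℂ, 0 ≤ dotProduct (star y)
          ((Matrix.of fun s t : Fin n =>
            dotProduct (star (g s χ)) (g t χ)) *ᵥ y) := by
        intro y
        rw [quad_expandC]
        exact gram_quad (fun s => g s χ) y
      have hS := schur_quadC hM hGq
      refine le_of_le_of_eq hS (Finset.sum_congr rfl fun s _ =>
        Finset.sum_congr rfl fun t _ => ?_)
      simp only [Matrix.map_apply, Matrix.of_apply]
      congr 1
      exact congrArg _ (fPow_eq_rpow hα (hreal (s, t)).2).symm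
end RealSide
end

section
/- Let m, n ≥ 2 be integers. (a) If α > 0 and α ∉ ℕ ∪ [n−2,∞), then there exist m×m Hermitian positive semidefinite matrices H_st (1 ≤ s,t ≤ n) that pairwise commute, such that the mn×mn block matrix (H_st)_{s,t=1}^n is positive semidefinite but (H_st^α)_{s,t=1}^n is not positive semidefinite. (b) If α < 0, then there exist pairwise commuting real symmetric positive definite m×m matrices H_st (1 ≤ s,t ≤ n) such that (H_st)_{s,t=1}^n is positive semidefinite but (H_st^α)_{s,t=1}^n is not positive semidefinite. -/
open scoped Classical ComplexOrder

lemma isHermitian_real_smul_one {m : ℕ} (c : ℝ) :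
    ((c:ℂ) • (1 : Matrix (Fin m) (Fin m) ℂ)).IsHermitian := by
  unfold Matrix.IsHermitian
  rw [Matrix.conjTranspose_smul, Matrix.conjTranspose_one]
  simp

lemma hermFun_real_smul_one {m : ℕ} (c : ℝ) (f : ℝ → ℂ) :
    hermFun f ((c:ℂ) • (1 : Matrix (Fin m) (Fin m) ℂ)) = f c • 1 := by
  have hB := isHermitian_real_smul_one (m := m) c
  have hdiag := Matrix.IsHermitian.conjStarAlgAut_star_eigenvectorUnitary hB
  rw [Unitary.conjStarAlgAut_star_apply] at hdiag
  rw [Matrix.mul_smul, Matrix.smul_mul, mul_one,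
    (Matrix.mem_unitaryGroup_iff').mp (Matrix.IsHermitian.eigenvectorUnitary hB).2] at hdiag
  have heig : ∀ i, hB.eigenvalues i = c := by
    intro i
    have := congrFun (congrFun hdiag.symm i) i
    simp [Matrix.diagonal_apply_eq, Matrix.one_apply] at this
    exact_mod_cast this
  rw [hermFun, dif_pos hB]
  have : (Matrix.diagonal fun i => f (hB.eigenvalues i)) = f c • 1 := by
    have : (fun i => f (hB.eigenvalues i)) = fun _ => f c := by
      funext i; rw [heig]
    rw [this]
    ext i j
    by_cases h : i = j <;> simp [Matrix.diagonal_apply, h, Matrix.one_apply]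
  rw [this, Matrix.mul_smul, Matrix.smul_mul, mul_one,
    (Matrix.mem_unitaryGroup_iff).mp (Matrix.IsHermitian.eigenvectorUnitary hB).2]

lemma star_dot_self_eq {n : ℕ} (x : Fin n → ℂ) :
    dotProduct (star x) x = ((∑ i, Complex.normSq (x i) : ℝ) : ℂ) := by
  simp [dotProduct, Pi.star_apply, Complex.normSq_eq_conj_mul_self]

lemma posSemidef_real_smul_one {m : ℕ} {c : ℝ} (hc : 0 ≤ c) :
    ((c:ℂ) • (1 : Matrix (Fin m) (Fin m) ℂ)).PosSemidef := by
  refine Matrix.posSemidef_iff_dotProduct_mulVec.mpr ⟨isHermitian_real_smul_one c, fun x => ?_⟩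
  rw [Matrix.smul_mulVec, Matrix.one_mulVec, dotProduct_smul]
  rw [star_dot_self_eq]
  rw [smul_eq_mul, ← Complex.ofReal_mul]
  rw [Complex.zero_le_real]
  have : 0 ≤ ∑ i, Complex.normSq (x i) :=
    Finset.sum_nonneg fun i _ => Complex.normSq_nonneg _
  exact mul_nonneg hc this

lemma posDef_real_smul_one {m : ℕ} {c : ℝ} (hc : 0 < c) :
    ((c:ℂ) • (1 : Matrix (Fin m) (Fin m) ℂ)).PosDef := by
  refine Matrix.posDef_iff_dotProduct_mulVec.mpr ⟨isHermitian_real_smul_one c, fun x hx => ?_⟩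
  rw [Matrix.smul_mulVec, Matrix.one_mulVec, dotProduct_smul]
  rw [star_dot_self_eq]
  rw [smul_eq_mul, ← Complex.ofReal_mul]
  rw [Complex.zero_lt_real]
  have h1 : 0 < ∑ i, Complex.normSq (x i) := by
    obtain ⟨i, hi⟩ := Function.ne_iff.mp hx
    have : 0 < Complex.normSq (x i) := Complex.normSq_pos.mpr hi
    have h2 : ∀ j ∈ Finset.univ, 0 ≤ Complex.normSq (x j) := fun j _ => Complex.normSq_nonneg _
    exact Finset.sum_pos' h2 ⟨i, Finset.mem_univ i, this⟩
  exact mul_pos hc h1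

open Matrix in
lemma quad_blockM_scalar {m n : ℕ} (A : Fin n → Fin n → ℝ) (x : Fin n × Fin m → ℂ) :
    dotProduct (star x) ((blockM (fun s t => ((A s t : ℝ) : ℂ) • 1)) *ᵥ x)
      = ∑ i : Fin m, ∑ s : Fin n, ∑ t : Fin n,
          (starRingEnd ℂ) (x (s, i)) * (A s t : ℂ) * x (t, i) := by
  rw [dotProduct]
  rw [Fintype.sum_prod_type]
  rw [Finset.sum_comm]
  refine Finset.sum_congr rfl fun i _ => Finset.sum_congr rfl fun s _ => ?_
  rw [Matrix.mulVec, dotProduct, Fintype.sum_prod_type]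
  simp only [blockM, Matrix.of_apply, Matrix.smul_apply, Matrix.one_apply, smul_eq_mul,
    mul_ite, mul_one, mul_zero, ite_mul, zero_mul]
  rw [Finset.mul_sum]
  refine Finset.sum_congr rfl fun t _ => ?_
  rw [Finset.sum_ite_eq Finset.univ i (fun j => (A s t : ℂ) * x (t, j))]
  simp [mul_comm, mul_assoc, mul_left_comm]

lemma blockM_scalar_isHermitian {m n : ℕ} (A : Fin n → Fin n → ℝ)
    (hsym : ∀ s t, A s t = A t s) :
    (blockM (m := m) (fun s t => ((A s t : ℝ) : ℂ) • 1)).IsHermitian := by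
  unfold Matrix.IsHermitian
  ext p q
  simp only [Matrix.conjTranspose_apply, blockM, Matrix.of_apply, Matrix.smul_apply,
    Matrix.one_apply, smul_eq_mul, star_mul']
  rw [Complex.star_def, Complex.conj_ofReal, hsym q.1 p.1]
  by_cases h : q.2 = p.2
  · rw [if_pos h, if_pos h.symm]; simp
  · rw [if_neg h, if_neg (fun hh => h hh.symm)]
    simp

lemma blockM_scalar_posSemidef {m n : ℕ} (A : Fin n → Fin n → ℝ)
    (hsym : ∀ s t, A s t = A t s)
    (hq : ∀ z : Fin n → ℂ, 0 ≤ ∑ s : Fin n, ∑ t : Fin n,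
          (starRingEnd ℂ) (z s) * (A s t : ℂ) * z t) :
    (blockM (m := m) (fun s t => ((A s t : ℝ) : ℂ) • 1)).PosSemidef := by
  refine Matrix.posSemidef_iff_dotProduct_mulVec.mpr ⟨blockM_scalar_isHermitian A hsym, fun x => ?_⟩
  rw [quad_blockM_scalar]
  exact Finset.sum_nonneg fun i _ => hq (fun s => x (s, i))

lemma blockM_scalar_not_posSemidef {m n : ℕ} (hm : 0 < m) (A B : Fin n → Fin n → ℝ)
    (y : Fin n → ℝ)
    (hneg : ∑ s : Fin n, ∑ t : Fin n, y s * B s t * y t < 0)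
    (hBA : ∀ s t, B s t = A s t) :
    ¬ (blockM (m := m) (fun s t => ((A s t : ℝ) : ℂ) • 1)).PosSemidef := by
  intro h
  set x : Fin n × Fin m → ℂ := fun p => if p.2 = ⟨0, hm⟩ then (y p.1 : ℂ) else 0 with hx
  have := (Matrix.posSemidef_iff_dotProduct_mulVec.mp h).2 x
  rw [quad_blockM_scalar] at this
  have heval : ∀ i : Fin m, (∑ s : Fin n, ∑ t : Fin n,
      (starRingEnd ℂ) (x (s, i)) * (A s t : ℂ) * x (t, i))
      = if i = ⟨0, hm⟩ then ((∑ s : Fin n, ∑ t : Fin n, y s * A s t * y t : ℝ) : ℂ) else 0 := by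
    intro i
    by_cases hi : i = ⟨0, hm⟩
    · subst hi
      simp only [hx, if_pos rfl]
      push_cast
      refine Finset.sum_congr rfl fun s _ => Finset.sum_congr rfl fun t _ => ?_
      rw [Complex.conj_ofReal]
    · simp [hx, hi]
  rw [Finset.sum_congr rfl (fun i _ => heval i)] at this
  rw [Finset.sum_ite_eq' Finset.univ (⟨0, hm⟩ : Fin m) _] at this
  simp only [Finset.mem_univ, if_pos] at this
  rw [Complex.zero_le_real] at this
  simp only [hBA] at hneg
  linarith

lemma quad_rank_two {n : ℕ} (v w : Fin n → ℝ) {ε : ℝ} (hε : 0 ≤ ε) (z : Fin n → ℂ) :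
    0 ≤ ∑ s : Fin n, ∑ t : Fin n,
        (starRingEnd ℂ) (z s) * ((v s * v t + ε * (w s * w t) : ℝ) : ℂ) * z t := by
  set a : ℂ := ∑ s : Fin n, (v s : ℂ) * z s with ha
  set b : ℂ := ∑ s : Fin n, (w s : ℂ) * z s with hb
  have key : ∑ s : Fin n, ∑ t : Fin n,
        (starRingEnd ℂ) (z s) * ((v s * v t + ε * (w s * w t) : ℝ) : ℂ) * z t
      = (starRingEnd ℂ) a * a + (ε : ℂ) * ((starRingEnd ℂ) b * b) := by
    rw [ha, hb, map_sum, map_sum, Finset.sum_mul_sum, Finset.sum_mul_sum]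
    rw [Finset.mul_sum, ← Finset.sum_add_distrib]
    refine Finset.sum_congr rfl fun s _ => ?_
    rw [Finset.mul_sum, ← Finset.sum_add_distrib]
    refine Finset.sum_congr rfl fun t _ => ?_
    simp only [map_mul, Complex.conj_ofReal]
    push_cast
    ring
  rw [key, ← Complex.normSq_eq_conj_mul_self, ← Complex.normSq_eq_conj_mul_self]
  have : ((Complex.normSq a : ℝ) : ℂ) + (ε : ℂ) * ((Complex.normSq b : ℝ) : ℂ)
      = ((Complex.normSq a + ε * Complex.normSq b : ℝ) : ℂ) := by push_cast; ring
  rw [this, Complex.zero_le_real]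
  have := Complex.normSq_nonneg a
  have := Complex.normSq_nonneg b
  positivity

open Matrix in
lemma exists_moment_vector (K : ℕ) :
    ∃ y : Fin (K+1) → ℝ, ∀ j : Fin (K+1),
      (∑ s : Fin (K+1), y s * (s : ℝ) ^ (j : ℕ)) = if j = Fin.last K then 1 else 0 := by
  set x : Fin (K+1) → ℝ := fun s => (s : ℝ) with hx
  have hinj : Function.Injective x := by
    intro a b hab
    have : ((a : ℕ) : ℝ) = ((b : ℕ) : ℝ) := hab
    exact Fin.ext (Nat.cast_injective this)
  have hdet : (Matrix.vandermonde x).det ≠ 0 :=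
    (Matrix.det_vandermonde_ne_zero_iff).mpr hinj
  have hdetT : (Matrix.vandermonde x)ᵀ.det ≠ 0 := by rwa [Matrix.det_transpose]
  set e : Fin (K+1) → ℝ := fun j => if j = Fin.last K then 1 else 0 with he
  refine ⟨((Matrix.vandermonde x)ᵀ)⁻¹ *ᵥ e, fun j => ?_⟩
  have h1 : (Matrix.vandermonde x)ᵀ *ᵥ (((Matrix.vandermonde x)ᵀ)⁻¹ *ᵥ e) = e := by
    rw [Matrix.mulVec_mulVec, Matrix.mul_nonsing_inv _ (isUnit_iff_ne_zero.mpr hdetT),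
      Matrix.one_mulVec]
  have h2 := congrFun h1 j
  rw [Matrix.mulVec, dotProduct] at h2
  simp only [Matrix.transpose_apply, Matrix.vandermonde_apply] at h2
  have : (if j = Fin.last K then (1:ℝ) else 0) = e j := rfl
  rw [this, ← h2]
  exact Finset.sum_congr rfl fun s _ => mul_comm _ _

noncomputable def Pfac (α : ℝ) (j : ℕ) : ℝ := ∏ i ∈ Finset.range j, (α - i)

noncomputable def Dfun (α : ℝ) (K : ℕ) (y : Fin (K+1) → ℝ) (j : ℕ) (ε : ℝ) : ℝ :=
  ∑ p : Fin (K+1) × Fin (K+1), y p.1 * y p.2 * ((p.1 : ℝ) * (p.2 : ℝ))^j * Pfac α j *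
    (1 + ε * ((p.1 : ℝ) * (p.2 : ℝ))) ^ (α - (j:ℝ))

lemma hasDerivAt_Dfun (α : ℝ) (K : ℕ) (y : Fin (K+1) → ℝ) (j : ℕ) {ε : ℝ} (hε : 0 ≤ ε) :
    HasDerivAt (Dfun α K y j) (Dfun α K y (j+1) ε) ε := by
  unfold Dfun
  refine HasDerivAt.fun_sum fun p _ => ?_
  set c : ℝ := (p.1 : ℝ) * (p.2 : ℝ) with hc
  have hcpos : 0 ≤ c := mul_nonneg (Nat.cast_nonneg _) (Nat.cast_nonneg _)
  have hbase : (0:ℝ) < 1 + ε * c := by positivity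
  have h1 : HasDerivAt (fun e : ℝ => 1 + e * c) c ε := by
    simpa using ((hasDerivAt_id ε).mul_const c).const_add 1
  have h2 := h1.rpow_const (p := α - (j:ℝ)) (Or.inl (ne_of_gt hbase))
  have h3 := h2.const_mul (y p.1 * y p.2 * c^j * Pfac α j)
  convert h3 using 1
  · rfl
  rw [Pfac, Finset.prod_range_succ, ← Pfac]
  have hexp : α - ((j+1 : ℕ):ℝ) = α - (j:ℝ) - 1 := by push_cast; ring
  rw [hexp, pow_succ]
  ring
lemma Dfun_zero (α : ℝ) (K : ℕ) (y : Fin (K+1) → ℝ) (j : ℕ) :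
    Dfun α K y j 0 = Pfac α j * (∑ s : Fin (K+1), y s * (s:ℝ)^j)^2 := by
  unfold Dfun
  simp only [zero_mul, add_zero, Real.one_rpow, mul_one]
  rw [sq, Finset.sum_mul_sum, Fintype.sum_prod_type]
  rw [Finset.mul_sum]
  refine Finset.sum_congr rfl fun s _ => ?_
  rw [Finset.mul_sum]
  refine Finset.sum_congr rfl fun t _ => ?_
  rw [mul_pow]
  ring

lemma exists_negative_sum (α : ℝ) (k : ℕ) (h1 : (k:ℝ) < α) (h2 : α < (k:ℝ) + 1) :
    ∃ ε : ℝ, 0 < ε ∧ ∃ y : Fin (k+3) → ℝ,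
      ∑ p : Fin (k+3) × Fin (k+3),
        y p.1 * y p.2 * (1 + ε * ((p.1 : ℝ) * (p.2 : ℝ))) ^ α < 0 := by
  set K := k + 2 with hK
  obtain ⟨y, hy⟩ := exists_moment_vector K
  -- values at 0
  have hmom : ∀ j : ℕ, j < K → (∑ s : Fin (K+1), y s * (s:ℝ)^j) = 0 := by
    intro j hj
    have := hy ⟨j, by omega⟩
    rw [if_neg (by intro h; apply absurd (congrArg Fin.val h); simp [Fin.last]; omega)] at this
    exact this
  have hmomK : (∑ s : Fin (K+1), y s * (s:ℝ)^K) = 1 := by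
    have := hy (Fin.last K)
    rw [if_pos rfl] at this
    simpa [Fin.last] using this
  have hP : Pfac α K < 0 := by
    rw [hK, Pfac, Finset.prod_range_succ]
    have hpos : 0 < ∏ i ∈ Finset.range (k+1), (α - i) := by
      refine Finset.prod_pos fun i hi => ?_
      have : (i:ℝ) ≤ (k:ℝ) := by
        exact_mod_cast Nat.cast_le.mpr (Nat.lt_succ_iff.mp (Finset.mem_range.mp hi))
      linarith
    have hneg : α - ((k+1 : ℕ):ℝ) < 0 := by push_cast; linarith
    exact mul_neg_of_pos_of_neg hpos hneg
  have hDK0 : Dfun α K y K 0 < 0 := by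
    rw [Dfun_zero, hmomK]
    simpa using hP
  -- continuity of Dfun K at 0 gives negativity nearby
  have hcont : ContinuousAt (Dfun α K y K) 0 :=
    (hasDerivAt_Dfun α K y K le_rfl).continuousAt
  obtain ⟨δ, hδpos, hδ⟩ := Metric.continuousAt_iff.mp hcont (-(Dfun α K y K 0)) (by linarith)
  set δ' := δ / 2 with hδ'
  have hδ'pos : 0 < δ' := by positivity
  have hbase : ∀ ε : ℝ, 0 < ε → ε ≤ δ' → Dfun α K y K ε < 0 := by
    intro ε hε1 hε2
    have : dist ε 0 < δ := by
      rw [Real.dist_eq, sub_zero, abs_of_pos hε1]; linarith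
    have := hδ this
    rw [Real.dist_eq] at this
    have := abs_lt.mp this
    linarith [this.1, this.2]
  -- downward induction
  have hind : ∀ d : ℕ, d ≤ K → ∀ ε : ℝ, 0 < ε → ε ≤ δ' → Dfun α K y (K - d) ε < 0 := by
    intro d
    induction d with
    | zero => intro _ ε h1' h2'; simpa using hbase ε h1' h2'
    | succ d ih =>
      intro hd ε hε1 hε2
      have hdK : d ≤ K := by omega
      have hj1 : K - (d+1) + 1 = K - d := by omega
      have hjlt : K - (d+1) < K := by omega
      have hanti : StrictAntiOn (Dfun α K y (K - (d+1))) (Set.Icc 0 δ') := by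
        refine strictAntiOn_of_deriv_neg (convex_Icc 0 δ') ?_ ?_
        · intro e he
          exact ((hasDerivAt_Dfun α K y _ he.1).continuousAt).continuousWithinAt
        · intro e he
          rw [interior_Icc] at he
          rw [(hasDerivAt_Dfun α K y _ (le_of_lt he.1)).deriv, hj1]
          exact ih hdK e he.1 (le_of_lt he.2)
      have h0mem : (0:ℝ) ∈ Set.Icc (0:ℝ) δ' := ⟨le_rfl, le_of_lt hδ'pos⟩
      have hεmem : ε ∈ Set.Icc (0:ℝ) δ' := ⟨le_of_lt hε1, hε2⟩
      have := hanti h0mem hεmem hε1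
      rw [Dfun_zero, hmom _ hjlt] at this
      simpa using this
  have hfinal := hind K le_rfl δ' hδ'pos le_rfl
  refine ⟨δ', hδ'pos, y, ?_⟩
  rw [Nat.sub_self] at hfinal
  unfold Dfun at hfinal
  simpa [Pfac] using hfinal

lemma sum_extend {n N : ℕ} (hNn : N ≤ n) (f : Fin n → ℝ)
    (hf : ∀ s : Fin n, ¬ ((s:ℕ) < N) → f s = 0) :
    ∑ s : Fin n, f s = ∑ s : Fin N, f (Fin.castLE hNn s) := by
  have hmap : ∑ s : Fin N, f (Fin.castLE hNn s)
      = ∑ s ∈ Finset.univ.map (Fin.castLEEmb hNn), f s := by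
    rw [Finset.sum_map Finset.univ (Fin.castLEEmb hNn) f]; rfl
  rw [hmap]
  refine (Finset.sum_subset (Finset.subset_univ _) fun x _ hx => ?_).symm
  refine hf x fun hlt => hx ?_
  refine Finset.mem_map.mpr ⟨⟨(x:ℕ), hlt⟩, Finset.mem_univ _, ?_⟩
  rfl

lemma commute_smul_one {m : ℕ} (a b : ℂ) :
    Commute (a • (1 : Matrix (Fin m) (Fin m) ℂ)) (b • 1) := by
  unfold Commute SemiconjBy
  rw [Matrix.smul_mul, Matrix.mul_smul, one_mul, smul_smul, Matrix.smul_mul, Matrix.mul_smul,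
    one_mul, smul_smul, mul_comm]



lemma fPow_of_pos {α x : ℝ} (hx : 0 < x) : fPow α x = x ^ α := by
  rw [fPow, if_neg hx.ne']

lemma hermPow_real_smul_one {m : ℕ} (α : ℝ) (c : ℝ) :
    hermPow α ((c:ℂ) • (1 : Matrix (Fin m) (Fin m) ℂ)) = ((fPow α c : ℝ) : ℂ) • 1 :=
  hermFun_real_smul_one c _

/-- Theorem 2, negative parts: (a) if `α > 0` and `α ∉ ℕ ∪ [n-2, ∞)`, there are pairwise
commuting positive semidefinite blocks forming a positive semidefinite block matrix whose
blockwise `α`-th power is not positive semidefinite; (b) if `α < 0`, there are pairwise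
commuting real symmetric positive definite blocks with the same failure. -/
theorem blockwise_power_commuting_counterexamples (m n : ℕ) (hm : 2 ≤ m) (hn : 2 ≤ n) :
    (∀ α : ℝ, 0 < α → ¬ ((∃ k : ℕ, 1 ≤ k ∧ α = k) ∨ (n : ℝ) - 2 ≤ α) →
      ∃ H : Fin n → Fin n → Matrix (Fin m) (Fin m) ℂ,
        (∀ s t, (H s t).PosSemidef) ∧
        (∀ s t s' t', Commute (H s t) (H s' t')) ∧
        (blockM H).PosSemidef ∧
        ¬ (blockM fun s t => hermPow α (H s t)).PosSemidef) ∧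
    (∀ α : ℝ, α < 0 →
      ∃ H : Fin n → Fin n → Matrix (Fin m) (Fin m) ℂ,
        (∀ s t, (H s t).PosDef) ∧
        (∀ s t i j, (H s t i j).im = 0) ∧
        (∀ s t, (H s t).IsSymm) ∧
        (∀ s t s' t', Commute (H s t) (H s' t')) ∧
        (blockM H).PosSemidef ∧
        ¬ (blockM fun s t => hermPow α (H s t)).PosSemidef) := by
  have hm0 : 0 < m := by omega
  constructor
  · -- Part (a)
    intro α hα hnot
    push_neg at hnot
    obtain ⟨hnotnat, hlt⟩ := hnot
    have hk2 : α < (⌊α⌋₊ : ℝ) + 1 := Nat.lt_floor_add_one α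
    have hk1 : (⌊α⌋₊ : ℝ) < α := by
      rcases lt_or_eq_of_le (Nat.floor_le hα.le) with h | h
      · exact h
      · exfalso
        have hge : 1 ≤ ⌊α⌋₊ := by
          by_contra hc
          have h0 : ⌊α⌋₊ = 0 := by omega
          rw [h0] at h
          simp at h
          linarith
        exact hnotnat ⌊α⌋₊ hge h.symm
    set k := ⌊α⌋₊ with hkdef
    have hNn : k + 3 ≤ n := by
      have ha1 : (k:ℝ) < (n:ℝ) - 2 := lt_trans hk1 hlt
      have ha2 : ((k + 2 : ℕ) : ℝ) < (n:ℝ) := by push_cast; linarith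
      have := Nat.cast_lt.mp ha2
      omega
    obtain ⟨ε, hεpos, y, hsum⟩ := exists_negative_sum α k hk1 hk2
    set v : Fin n → ℝ := fun s => if (s:ℕ) < k + 3 then 1 else 0 with hv
    set w : Fin n → ℝ := fun s => if (s:ℕ) < k + 3 then ((s:ℕ):ℝ) else 0 with hw
    set A : Fin n → Fin n → ℝ := fun s t => v s * v t + ε * (w s * w t) with hA
    have hvnn : ∀ s, 0 ≤ v s := fun s => by rw [hv]; dsimp only; split <;> norm_num
    have hwnn : ∀ s, 0 ≤ w s := fun s => by rw [hw]; dsimp only; split <;> positivity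
    have hAnn : ∀ s t, 0 ≤ A s t := fun s t => by
      have h1 := hvnn s; have h2 := hvnn t; have h3 := hwnn s; have h4 := hwnn t
      rw [hA]; dsimp only; positivity
    refine ⟨fun s t => ((A s t : ℝ) : ℂ) • 1,
      fun s t => posSemidef_real_smul_one (hAnn s t),
      fun s t s' t' => commute_smul_one _ _,
      blockM_scalar_posSemidef A (fun s t => by rw [hA]; dsimp only; ring)
        (fun z => quad_rank_two v w hεpos.le z), ?_⟩
    have hblocks : (fun s t => hermPow α (((A s t : ℝ) : ℂ) • 1))
        = fun s t : Fin n => ((fPow α (A s t) : ℝ) : ℂ) • (1 : Matrix (Fin m) (Fin m) ℂ) := by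
      funext s t; exact hermPow_real_smul_one α (A s t)
    rw [hblocks]
    set yn : Fin n → ℝ := fun s => if h : (s:ℕ) < k + 3 then y ⟨(s:ℕ), h⟩ else 0 with hyn
    have hyn0 : ∀ s : Fin n, ¬ ((s:ℕ) < k + 3) → yn s = 0 := fun s hs => by
      rw [hyn]; exact dif_neg hs
    have hyncast : ∀ s : Fin (k+3), yn (Fin.castLE hNn s) = y s := by
      intro s
      rw [hyn]; dsimp only
      rw [dif_pos (show ((Fin.castLE hNn s : Fin n) : ℕ) < k + 3 from s.isLt)]
      rfl
    have hvcast : ∀ s : Fin (k+3), v (Fin.castLE hNn s) = 1 := by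
      intro s
      rw [hv]; dsimp only
      rw [if_pos (show ((Fin.castLE hNn s : Fin n) : ℕ) < k + 3 from s.isLt)]
    have hwcast : ∀ s : Fin (k+3), w (Fin.castLE hNn s) = ((s:ℕ):ℝ) := by
      intro s
      rw [hw]; dsimp only
      rw [if_pos (show ((Fin.castLE hNn s : Fin n) : ℕ) < k + 3 from s.isLt)]
      rfl
    refine blockM_scalar_not_posSemidef hm0 (fun s t => fPow α (A s t))
      (fun s t => fPow α (A s t)) yn ?_ (fun _ _ => rfl)
    have hred : ∑ s : Fin n, ∑ t : Fin n, yn s * fPow α (A s t) * yn t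
        = ∑ p : Fin (k+3) × Fin (k+3),
            y p.1 * y p.2 * (1 + ε * ((p.1 : ℝ) * (p.2 : ℝ))) ^ α := by
      rw [sum_extend hNn (fun s => ∑ t : Fin n, yn s * fPow α (A s t) * yn t)
        (fun s hs => by
          refine Finset.sum_eq_zero fun t _ => ?_
          rw [hyn0 s hs]; ring)]
      rw [Fintype.sum_prod_type]
      refine Finset.sum_congr rfl fun s _ => ?_
      rw [sum_extend hNn (fun t => yn (Fin.castLE hNn s) * fPow α (A (Fin.castLE hNn s) t) * yn t)
        (fun t ht => by simp only [hyn0 t ht, mul_zero])]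
      refine Finset.sum_congr rfl fun t _ => ?_
      have hAval : A (Fin.castLE hNn s) (Fin.castLE hNn t)
          = 1 + ε * (((s:ℕ):ℝ) * ((t:ℕ):ℝ)) := by
        rw [hA]; dsimp only
        rw [hvcast, hvcast, hwcast, hwcast]; ring
      have hpos : (0:ℝ) < 1 + ε * (((s:ℕ):ℝ) * ((t:ℕ):ℝ)) := by positivity
      rw [hyncast, hyncast, hAval, fPow_of_pos hpos]
      ring
    rw [hred]
    exact hsum
  · -- Part (b)
    intro α hα
    set u : Fin n → ℝ := fun s => if (s:ℕ) = 0 then 1 else -1 with hu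
    set v : Fin n → ℝ := fun _ => 1 with hv
    set A : Fin n → Fin n → ℝ := fun s t => v s * v t + (1/2) * (u s * u t) with hA
    have hu2 : ∀ s, u s = 1 ∨ u s = -1 := fun s => by
      rw [hu]; dsimp only; split
      · exact Or.inl rfl
      · exact Or.inr rfl
    have hApos : ∀ s t, 0 < A s t := fun s t => by
      rw [hA]; dsimp only
      rw [hv]; dsimp only
      rcases hu2 s with h | h <;> rcases hu2 t with h' | h' <;> rw [h, h'] <;> norm_num
    refine ⟨fun s t => ((A s t : ℝ) : ℂ) • 1,
      fun s t => posDef_real_smul_one (hApos s t), ?_, ?_,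
      fun s t s' t' => commute_smul_one _ _,
      blockM_scalar_posSemidef A (fun s t => by rw [hA]; dsimp only; ring)
        (fun z => quad_rank_two v u (by norm_num) z), ?_⟩
    · intro s t i j
      dsimp only
      by_cases h : i = j <;> simp [Matrix.one_apply, h]
    · intro s t
      unfold Matrix.IsSymm
      dsimp only
      rw [Matrix.transpose_smul, Matrix.transpose_one]
    · have hblocks : (fun s t => hermPow α (((A s t : ℝ) : ℂ) • 1))
          = fun s t : Fin n => ((fPow α (A s t) : ℝ) : ℂ) • (1 : Matrix (Fin m) (Fin m) ℂ) := by
        funext s t; exact hermPow_real_smul_one α (A s t)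
      rw [hblocks]
      set yn : Fin n → ℝ := fun s => if (s:ℕ) < 2 then (if (s:ℕ) = 0 then 1 else -1) else 0
        with hyn
      have hyn0 : ∀ s : Fin n, ¬ ((s:ℕ) < 2) → yn s = 0 := fun s hs => by
        rw [hyn]; dsimp only; rw [if_neg hs]
      refine blockM_scalar_not_posSemidef hm0 (fun s t => fPow α (A s t))
        (fun s t => fPow α (A s t)) yn ?_ (fun _ _ => rfl)
      have c0 : ((Fin.castLE hn (0 : Fin 2) : Fin n) : ℕ) = 0 := rfl
      have c1 : ((Fin.castLE hn (1 : Fin 2) : Fin n) : ℕ) = 1 := rfl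
      have hyn0v : yn (Fin.castLE hn (0 : Fin 2)) = 1 := by
        rw [hyn]; dsimp only; rw [c0]; norm_num
      have hyn1v : yn (Fin.castLE hn (1 : Fin 2)) = -1 := by
        rw [hyn]; dsimp only; rw [c1]; norm_num
      have hu0 : u (Fin.castLE hn (0 : Fin 2)) = 1 := by
        rw [hu]; dsimp only; rw [c0]; norm_num
      have hu1 : u (Fin.castLE hn (1 : Fin 2)) = -1 := by
        rw [hu]; dsimp only; rw [c1]; norm_num
      have hA00 : A (Fin.castLE hn (0 : Fin 2)) (Fin.castLE hn (0 : Fin 2)) = 3/2 := by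
        rw [hA]; dsimp only; rw [hv]; dsimp only; rw [hu0]; norm_num
      have hA01 : A (Fin.castLE hn (0 : Fin 2)) (Fin.castLE hn (1 : Fin 2)) = 1/2 := by
        rw [hA]; dsimp only; rw [hv]; dsimp only; rw [hu0, hu1]; norm_num
      have hA10 : A (Fin.castLE hn (1 : Fin 2)) (Fin.castLE hn (0 : Fin 2)) = 1/2 := by
        rw [hA]; dsimp only; rw [hv]; dsimp only; rw [hu1, hu0]; norm_num
      have hA11 : A (Fin.castLE hn (1 : Fin 2)) (Fin.castLE hn (1 : Fin 2)) = 3/2 := by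
        rw [hA]; dsimp only; rw [hv]; dsimp only; rw [hu1]; norm_num
      have hred : ∑ s : Fin n, ∑ t : Fin n, yn s * fPow α (A s t) * yn t
          = 2 * ((3/2 : ℝ) ^ α - (1/2 : ℝ) ^ α) := by
        rw [sum_extend hn (fun s => ∑ t : Fin n, yn s * fPow α (A s t) * yn t)
          (fun s hs => by
            refine Finset.sum_eq_zero fun t _ => ?_
            rw [hyn0 s hs]; ring)]
        rw [Fin.sum_univ_two]
        rw [sum_extend hn (fun t => yn (Fin.castLE hn 0) * fPow α (A (Fin.castLE hn 0) t) * yn t)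
          (fun t ht => by simp only [hyn0 t ht, mul_zero])]
        rw [sum_extend hn (fun t => yn (Fin.castLE hn 1) * fPow α (A (Fin.castLE hn 1) t) * yn t)
          (fun t ht => by simp only [hyn0 t ht, mul_zero])]
        rw [Fin.sum_univ_two, Fin.sum_univ_two]
        rw [hyn0v, hyn1v, hA00, hA01, hA10, hA11]
        rw [fPow_of_pos (by norm_num : (0:ℝ) < 3/2), fPow_of_pos (by norm_num : (0:ℝ) < 1/2)]
        ring
      rw [hred]
      have := Real.rpow_lt_rpow_of_neg (by norm_num : (0:ℝ) < 1/2)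
        (by norm_num : (1/2:ℝ) < 3/2) hα
      linarith
end

section
/- Let n ≥ 3 be an integer and α > 1 a real number. If the entrywise map A ↦ (Ψ_{α−1,1}(a_st)) sends every (n−1)×(n−1) Hermitian positive semidefinite complex matrix to a positive semidefinite matrix, then the entrywise map A ↦ (Ψ_{α,0}(a_st)) sends every n×n Hermitian positive semidefinite complex matrix to a positive semidefinite matrix. -/
open scoped Classical ComplexOrder

section Helpers

open Matrix

local notation "conj'" => starRingEnd ℂ

lemma psi_zero_right (α : ℝ) (hα : 0 < α) (z : ℂ) :
    Psi α 0 z = ((‖z‖ ^ α : ℝ) : ℂ) := by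
  unfold Psi
  by_cases hz : z = 0
  · simp [hz, Real.zero_rpow hα.ne']
  · simp [hz]

lemma psi_one_eq (β : ℝ) (z : ℂ) (hz : z ≠ 0) :
    Psi β 1 z = ((‖z‖ ^ (β - 1) : ℝ) : ℂ) * z := by
  have habs : (0:ℝ) < ‖z‖ := by
    simpa [norm_pos_iff] using hz
  have hexp : Complex.exp ((z.arg : ℂ) * Complex.I) = z / (‖z‖ : ℂ) := by
    rw [eq_div_iff (by exact_mod_cast habs.ne'), mul_comm]
    exact Complex.norm_mul_exp_arg_mul_I z
  unfold Psi
  rw [if_neg hz]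
  push_cast
  rw [one_mul, hexp, Real.rpow_sub habs, Real.rpow_one]
  push_cast
  field_simp

lemma hasDerivAt_abs_rpow_zero {α : ℝ} (hα : 1 < α) :
    HasDerivAt (fun u : ℝ => |u| ^ α) 0 0 := by
  have hα0 : α ≠ 0 := by linarith
  rw [hasDerivAt_iff_tendsto_slope]
  have hslope : ∀ u : ℝ, u ≠ 0 → ‖slope (fun u : ℝ => |u| ^ α) 0 u‖ = |u| ^ (α - 1) := by
    intro u hu
    have hu' : |u| ≠ 0 := abs_ne_zero.2 hu
    rw [slope_def_field, abs_zero, Real.zero_rpow hα0, sub_zero, sub_zero,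
      Real.norm_eq_abs, abs_div, abs_of_nonneg (Real.rpow_nonneg (abs_nonneg u) α)]
    exact (Real.rpow_sub_one hu' α).symm
  have hev : ∀ᶠ u in nhdsWithin (0:ℝ) {(0:ℝ)}ᶜ,
      ‖slope (fun u : ℝ => |u| ^ α) 0 u‖ ≤ |u| ^ (α - 1) := by
    filter_upwards [self_mem_nhdsWithin] with u hu
    exact le_of_eq (hslope u hu)
  refine squeeze_zero_norm' hev ?_
  have hc : ContinuousAt (fun u : ℝ => |u| ^ (α - 1)) 0 := by
      have h1 : ContinuousAt (fun v : ℝ => v ^ (α - 1)) (|0| : ℝ) := by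
        simpa using Real.continuousAt_rpow_const 0 (α - 1) (Or.inr (by linarith))
      exact h1.comp continuous_abs.continuousAt
  have := hc.tendsto.mono_left (nhdsWithin_le_nhds (s := {(0:ℝ)}ᶜ))
  simpa [abs_zero, Real.zero_rpow (by linarith : α - 1 ≠ 0)] using this

lemma hasDerivAt_key {α : ℝ} (hα : 1 < α) (b c : ℂ) (l : ℝ) :
    HasDerivAt (fun lam : ℝ => ‖(b + lam * c)‖ ^ α)
      (α * ((starRingEnd ℂ) (Psi (α - 1) 1 (b + l * c)) * c).re) l := by
  set z₀ : ℂ := b + l * c with hz₀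
  by_cases hz : z₀ = 0
  · -- zero case
    have hb : b = -(l : ℂ) * c := by
      have := hz
      rw [hz₀] at this
      linear_combination this
    have hfun : (fun lam : ℝ => ‖(b + lam * c)‖ ^ α)
        = fun lam : ℝ => ‖c‖ ^ α * |lam - l| ^ α := by
      funext lam
      rw [hb]
      have : -(l:ℂ) * c + (lam:ℂ) * c = ((lam - l : ℝ) : ℂ) * c := by push_cast; ring
      rw [this, norm_mul, Complex.norm_real, Real.norm_eq_abs,
        Real.mul_rpow (abs_nonneg _) (norm_nonneg c), mul_comm]
    rw [hfun]
    have h0 : Psi (α - 1) 1 z₀ = 0 := by rw [hz]; simp [Psi]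
    rw [h0]
    simp only [map_zero, zero_mul, Complex.zero_re, mul_zero]
    have hcomp : HasDerivAt (fun lam : ℝ => |lam - l| ^ α) 0 l := by
      have hg : HasDerivAt (fun lam : ℝ => lam - l) 1 l := (hasDerivAt_id l).sub_const l
      have h0 : HasDerivAt (fun u : ℝ => |u| ^ α) 0 ((fun lam : ℝ => lam - l) l) := by
        simp only [sub_self]; exact hasDerivAt_abs_rpow_zero hα
      have := HasDerivAt.comp (h₂ := fun u : ℝ => |u| ^ α) (h := fun lam : ℝ => lam - l)
        l h0 hg
      rw [zero_mul] at this; exact this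
    simpa using hcomp.const_mul (‖c‖ ^ α)
  · -- nonzero case
    have hfun : (fun lam : ℝ => ‖(b + lam * c)‖ ^ α)
        = fun lam : ℝ => Complex.normSq (b + lam * c) ^ (α / 2) := by
      funext lam
      rw [Complex.norm_def, Real.sqrt_eq_rpow,
        ← Real.rpow_mul (Complex.normSq_nonneg _), show (1/2)*α = α/2 by ring]
    rw [hfun]
    have hz' : HasDerivAt (fun lam : ℝ => b + lam * c) c l := by
      have h1 : HasDerivAt (fun lam : ℝ => (lam : ℂ)) 1 l := Complex.ofRealCLM.hasDerivAt
      simpa using (h1.mul_const c).const_add b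
    have hre : HasDerivAt (fun lam : ℝ => (b + lam * c).re) c.re l :=
      Complex.reCLM.hasFDerivAt.comp_hasDerivAt l hz'
    have him : HasDerivAt (fun lam : ℝ => (b + lam * c).im) c.im l :=
      Complex.imCLM.hasFDerivAt.comp_hasDerivAt l hz'
    have hp : HasDerivAt (fun lam : ℝ => Complex.normSq (b + lam * c))
        (2 * ((starRingEnd ℂ) z₀ * c).re) l := by
      have heq : (fun lam : ℝ => Complex.normSq (b + lam * c))
          = fun lam : ℝ => (b + lam * c).re * (b + lam * c).re
            + (b + lam * c).im * (b + lam * c).im := by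
        funext lam; rw [Complex.normSq_apply]
      rw [heq]
      have := (hre.fun_mul hre).fun_add (him.fun_mul him)
      refine this.congr_deriv ?_
      simp [Complex.mul_re, hz₀]
      ring
    have hne : Complex.normSq z₀ ≠ 0 := by
      simpa [Complex.normSq_eq_zero] using hz
    have hmain := hp.rpow_const (p := α / 2) (Or.inl hne)
    rw [← hz₀] at hmain
    convert hmain using 1
    -- value equality
    rw [psi_one_eq _ _ hz, show α - 1 - 1 = α - 2 by ring]
    rw [_root_.map_mul, Complex.conj_ofReal, mul_assoc, Complex.re_ofReal_mul]
    have h2 : Complex.normSq z₀ ^ (α / 2 - 1) = ‖z₀‖ ^ (α - 2) := by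
      rw [Complex.normSq_eq_norm_sq, ← Real.rpow_natCast (‖z₀‖) 2,
        ← Real.rpow_mul (norm_nonneg z₀), show ((2:ℕ):ℝ)*(α/2-1) = α - 2 by push_cast; ring]
    rw [h2]
    ring


lemma mulVec_single_fun {N : ℕ} (M : Matrix (Fin N) (Fin N) ℂ) (j : Fin N) (x : ℂ) :
    M.mulVec (Pi.single j x) = fun i => M i j * x :=
  funext fun _ => dotProduct_single _ _ _

lemma star_pi_single {N : ℕ} (i : Fin N) (x : ℂ) :
    star (Pi.single i x : Fin N → ℂ) = Pi.single i (conj' x) := by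
  funext s
  by_cases hs : s = i
  · subst hs; simp
  · simp [Pi.single_apply, hs]

lemma quadform_eq {N : ℕ} (M : Matrix (Fin N) (Fin N) ℂ) (y : Fin N → ℂ) :
    star y ⬝ᵥ M.mulVec y = ∑ s, ∑ t, conj' (y s) * M s t * y t := by
  simp only [dotProduct, mulVec, Pi.star_apply, RCLike.star_def, Finset.mul_sum]
  exact Finset.sum_congr rfl fun s _ => Finset.sum_congr rfl fun t _ => by ring

lemma outer_posSemidef {N : ℕ} (ξ : Fin N → ℂ) :
    (Matrix.of fun s t => ξ s * conj' (ξ t)).PosSemidef := by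
  refine Matrix.PosSemidef.of_dotProduct_mulVec_nonneg ?_ ?_
  · ext s t
    simp [Matrix.conjTranspose_apply, mul_comm]
  · intro y
    rw [quadform_eq]
    have : ∑ s, ∑ t, conj' (y s) * (Matrix.of fun s t => ξ s * conj' (ξ t)) s t * y t
        = conj' (∑ t, conj' (ξ t) * y t) * (∑ t, conj' (ξ t) * y t) := by
      rw [map_sum, Finset.sum_mul_sum]
      exact Finset.sum_congr rfl fun s _ => Finset.sum_congr rfl fun t _ => by
        simp only [Matrix.of_apply, _root_.map_mul, RingHomCompTriple.comp_apply, RingHom.id_apply]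
        ring
    rw [this, ← Complex.normSq_eq_conj_mul_self]
    exact Complex.zero_le_real.2 (Complex.normSq_nonneg _)

lemma psd_re_nonneg {N : ℕ} {A : Matrix (Fin N) (Fin N) ℂ} (hA : A.PosSemidef)
    (y : Fin N → ℂ) : 0 ≤ (star y ⬝ᵥ A.mulVec y).re := by
  have := hA.dotProduct_mulVec_nonneg y
  rw [Complex.le_def] at this
  simpa using this.1

lemma psd_entry_col_eq_zero {N : ℕ} {A : Matrix (Fin N) (Fin N) ℂ} (hA : A.PosSemidef)
    {e : Fin N} (he : A e e = 0) (t : Fin N) : A t e = 0 := by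
  by_contra hc
  have hns : 0 < Complex.normSq (A t e) := by
    simpa [Complex.normSq_pos] using hc
  have key : ∀ k : ℝ, 0 ≤ (A t t).re - 2 * k * Complex.normSq (A t e) := by
    intro k
    set μ : ℂ := -(k : ℂ) * conj' (A t e) with hμ
    set z : Fin N → ℂ := Pi.single t 1 + Pi.single e μ with hzdef
    have hform : star z ⬝ᵥ A.mulVec z
        = A t t + (μ * A t e + conj' (μ * A t e)) := by
      have hmv : A.mulVec z = A.mulVec (Pi.single t 1) + A.mulVec (Pi.single e μ) := by
        rw [hzdef, Matrix.mulVec_add]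
      rw [hzdef, star_add, star_pi_single, star_pi_single, hmv]
      rw [add_dotProduct, dotProduct_add, dotProduct_add]
      rw [mulVec_single_fun, mulVec_single_fun]
      rw [single_dotProduct, single_dotProduct, single_dotProduct, single_dotProduct]
      rw [he]
      have het : A e t = conj' (A t e) := (hA.1.apply e t).symm
      rw [het]
      simp only [_root_.map_one, _root_.map_mul, Complex.conj_conj]
      ring
    have h0 := hA.dotProduct_mulVec_nonneg z
    rw [hform] at h0
    rw [Complex.le_def] at h0
    have h1 := h0.1
    have hμc : (μ * A t e) = -(k:ℂ) * (Complex.normSq (A t e) : ℂ) := by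
      rw [hμ, mul_assoc]
      congr 1
      rw [← Complex.normSq_eq_conj_mul_self]
    rw [hμc] at h1
    simp only [Complex.add_re, Complex.zero_re, Complex.conj_re] at h1
    have hre : ((-(k:ℂ) * ((Complex.normSq (A t e) : ℝ) : ℂ)).re) = -(k * Complex.normSq (A t e)) := by
      simp [Complex.mul_re]
    rw [hre] at h1
    linarith
  set k₀ : ℝ := ((A t t).re + 1) / (2 * Complex.normSq (A t e)) with hk₀
  have hk : 2 * k₀ * Complex.normSq (A t e) = (A t t).re + 1 := by
    rw [hk₀]; field_simp
  have hfin := key k₀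
  rw [hk] at hfin
  linarith

lemma psd_outer_decomp {N : ℕ} {A : Matrix (Fin N) (Fin N) ℂ} (hA : A.PosSemidef) (e : Fin N) :
    ∃ ξ : Fin N → ℂ,
      (A - Matrix.of fun s t => ξ s * conj' (ξ t)).PosSemidef ∧
      (∀ t, A e t = ξ e * conj' (ξ t)) ∧ (∀ s, A s e = ξ s * conj' (ξ e)) := by
  by_cases he : A e e = 0
  · refine ⟨0, ?_, ?_, ?_⟩
    · have : (A - Matrix.of fun s t => (0 : Fin N → ℂ) s * conj' ((0 : Fin N → ℂ) t)) = A := by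
        ext s t; simp
      rw [this]; exact hA
    · intro t
      have := psd_entry_col_eq_zero hA he t
      have het : A e t = conj' (A t e) := (hA.1.apply e t).symm
      simp [het, this]
    · intro s
      simp [psd_entry_col_eq_zero hA he s]
  · -- A e e ≠ 0
    have hdr : A e e = ((A e e).re : ℂ) := by
      have h1 : conj' (A e e) = A e e := hA.1.apply e e
      rw [Complex.conj_eq_iff_re] at h1
      exact h1.symm
    set r : ℝ := (A e e).re with hrdef
    have hr0 : 0 ≤ r := by
      have := psd_re_nonneg hA (Pi.single e 1)
      have hq : (star (Pi.single e 1 : Fin N → ℂ) ⬝ᵥ A.mulVec (Pi.single e 1)) = A e e := by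
        rw [star_pi_single, mulVec_single_fun, single_dotProduct]
        simp
      rw [hq] at this
      exact this
    have hrpos : 0 < r := lt_of_le_of_ne hr0 (by
      intro hcon
      exact he (by rw [hdr, ← hcon]; simp))
    set sq : ℝ := Real.sqrt r with hsq
    have hsqpos : 0 < sq := Real.sqrt_pos.2 hrpos
    have hsqsq : (sq : ℂ) * (sq : ℂ) = (r : ℂ) := by
      rw [← Complex.ofReal_mul, Real.mul_self_sqrt hr0]
    refine ⟨fun s => A s e / (sq : ℂ), ?_, ?_, ?_⟩
    · -- PSD of C
      refine Matrix.PosSemidef.of_dotProduct_mulVec_nonneg ?_ ?_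
      · -- Hermitian
        apply Matrix.IsHermitian.sub hA.1
        exact (outer_posSemidef _).1
      · intro y
        set L : ℂ := ∑ t, A e t * y t with hL
        have hmv : (A.mulVec y) e = L := by
          simp [Matrix.mulVec, dotProduct, hL]
        -- sum fact
        have hsum : ∑ s, conj' (y s) * A s e = conj' L := by
          rw [hL, map_sum]
          refine Finset.sum_congr rfl fun s _ => ?_
          rw [_root_.map_mul]
          rw [← hA.1.apply s e]
          ring_nf
          rfl
        -- quadratic form of the outer part
        have houter : star y ⬝ᵥ (Matrix.of fun s t =>
            (A s e / (sq:ℂ)) * conj' (A t e / (sq:ℂ))).mulVec y = conj' L * L / (r : ℂ) := by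
          rw [quadform_eq]
          have : ∀ s t : Fin N, conj' (y s) * ((A s e / (sq:ℂ)) * conj' (A t e / (sq:ℂ))) * y t
              = (conj' (y s) * A s e) * (conj' (A t e) * y t) / ((sq:ℂ) * (sq:ℂ)) := by
            intro s t
            rw [map_div₀, Complex.conj_ofReal]
            ring
          calc (∑ s, ∑ t, conj' (y s) * (Matrix.of fun s t =>
                  (A s e / (sq:ℂ)) * conj' (A t e / (sq:ℂ))) s t * y t)
              = (∑ s, conj' (y s) * A s e) * (∑ t, conj' (A t e) * y t) / ((sq:ℂ)*(sq:ℂ)) := by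
                rw [Finset.sum_mul_sum, Finset.sum_div]
                refine Finset.sum_congr rfl fun s _ => ?_
                rw [Finset.sum_div]
                exact Finset.sum_congr rfl fun t _ => this s t
            _ = conj' L * L / (r : ℂ) := by
                rw [hsum, hsqsq]
                congr 2
                rw [hL]
                refine Finset.sum_congr rfl fun t _ => ?_
                rw [← hA.1.apply e t, RCLike.star_def]
        -- the substitution vector
        set u : Fin N → ℂ := Pi.single e (L / (r:ℂ)) with hu
        have hrne : ((r:ℝ):ℂ) ≠ 0 := by exact_mod_cast hrpos.ne'
        have hzform : star (y - u) ⬝ᵥ A.mulVec (y - u)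
            = star y ⬝ᵥ A.mulVec y - conj' L * L / (r:ℂ) := by
          rw [hu, Matrix.mulVec_sub, star_sub, star_pi_single, sub_dotProduct,
            dotProduct_sub, dotProduct_sub, mulVec_single_fun, single_dotProduct, hmv]
          have h1 : star y ⬝ᵥ (fun s => A s e * (L / (r:ℂ))) = conj' L * L / (r:ℂ) := by
            simp only [dotProduct, Pi.star_apply, RCLike.star_def]
            have : ∀ s, conj' (y s) * (A s e * (L / (r:ℂ)))
                = (conj' (y s) * A s e) * L / (r:ℂ) := fun s => by ring
            rw [Finset.sum_congr rfl fun s _ => this s, ← Finset.sum_div, ← Finset.sum_mul, hsum]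
          have h4 : conj' (L / (r:ℂ)) * L = conj' L * L / (r:ℂ) := by
            rw [map_div₀, Complex.conj_ofReal]; ring
          have h5 : (Pi.single e (conj' (L / (r:ℂ))) : Fin N → ℂ) ⬝ᵥ (fun i => A i e * (L/(r:ℂ)))
              = conj' L * L / (r:ℂ) := by
            rw [single_dotProduct, hdr, map_div₀, Complex.conj_ofReal]
            field_simp
            try ring
          rw [h1, h4, h5]
          ring
        have hC : star y ⬝ᵥ (A - Matrix.of fun s t =>
            (A s e / (sq:ℂ)) * conj' (A t e / (sq:ℂ))).mulVec y
            = star (y - u) ⬝ᵥ A.mulVec (y - u) := by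
          rw [Matrix.sub_mulVec, dotProduct_sub, houter, hzform]
        rw [hC]
        exact hA.dotProduct_mulVec_nonneg _
    · intro t
      have het : A e t = conj' (A t e) := (hA.1.apply e t).symm
      have hrne : ((r:ℝ):ℂ) ≠ 0 := by exact_mod_cast hrpos.ne'
      simp only [map_div₀, Complex.conj_ofReal, het, hdr]
      rw [div_mul_div_comm, hsqsq]
      field_simp
      try ring
    · intro s
      have hrne : ((r:ℝ):ℂ) ≠ 0 := by exact_mod_cast hrpos.ne'
      have hee : conj' (A e e) = A e e := hA.1.apply e e
      simp only [map_div₀, Complex.conj_ofReal, hee, hdr]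
      rw [div_mul_div_comm, hsqsq]
      field_simp
      try ring

lemma conj_posSemidef {N : ℕ} {P : Matrix (Fin N) (Fin N) ℂ} (hP : P.PosSemidef) :
    (Matrix.of fun s t => conj' (P s t)).PosSemidef := by
  have heq : (Matrix.of fun s t => conj' (P s t)) = Pᵀ := by
    ext s t
    rw [Matrix.of_apply, Matrix.transpose_apply, ← hP.1.apply t s, RCLike.star_def]
  rw [heq]
  exact hP.transpose

lemma schur_hadamard {N : ℕ} {P C : Matrix (Fin N) (Fin N) ℂ}
    (hP : P.PosSemidef) (hC : C.PosSemidef) :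
    (Matrix.of fun s t => P s t * C s t).PosSemidef := by
  refine Matrix.PosSemidef.of_dotProduct_mulVec_nonneg ?_ ?_
  · ext s t
    rw [Matrix.conjTranspose_apply, Matrix.of_apply, Matrix.of_apply, star_mul']
    rw [hP.1.apply s t, hC.1.apply s t]
  · intro y
    rw [quadform_eq]
    set U : Matrix (Fin N) (Fin N) ℂ := (hP.1.eigenvectorUnitary : Matrix (Fin N) (Fin N) ℂ) with hU
    set d := hP.1.eigenvalues with hd
    have hentry : ∀ s t, P s t = ∑ i, U s i * ((d i : ℝ) : ℂ) * star (U t i) := by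
      intro s t
      conv_lhs => rw [hP.1.spectral_theorem]
      rw [Unitary.conjStarAlgAut_apply, Matrix.mul_apply]
      refine Finset.sum_congr rfl fun i _ => ?_
      rw [Matrix.mul_diagonal, Matrix.star_apply]
      rfl
    have hterm : ∀ s t, conj' (y s) * ((Matrix.of fun s t => P s t * C s t) s t) * y t
        = ∑ i, ((d i : ℝ) : ℂ) * ((conj' (y s) * U s i) * C s t * (y t * star (U t i))) := by
      intro s t
      rw [Matrix.of_apply, hentry s t, Finset.sum_mul, Finset.mul_sum, Finset.sum_mul]
      exact Finset.sum_congr rfl fun i _ => by ring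
    rw [Finset.sum_congr rfl fun s _ => Finset.sum_congr rfl fun t _ => hterm s t]
    rw [Finset.sum_congr rfl fun s (_ : s ∈ Finset.univ) => Finset.sum_comm]
    rw [Finset.sum_comm]
    refine Finset.sum_nonneg fun i _ => ?_
    have hw : ∀ s, (∑ t, ((d i : ℝ) : ℂ) * ((conj' (y s) * U s i) * C s t * (y t * star (U t i))))
        = ((d i : ℝ) : ℂ) * ∑ t, conj' ((fun t => y t * star (U t i)) s) * C s t
            * ((fun t => y t * star (U t i)) t) := by
      intro s
      rw [Finset.mul_sum]
      refine Finset.sum_congr rfl fun t _ => ?_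
      simp only [star_mul', star_star, RCLike.star_def, _root_.map_mul, Complex.conj_conj]
      try ring
    rw [Finset.sum_congr rfl fun s (_ : s ∈ Finset.univ) => hw s, ← Finset.mul_sum]
    have hform := hC.dotProduct_mulVec_nonneg (fun t => y t * star (U t i))
    rw [quadform_eq] at hform
    exact mul_nonneg (Complex.zero_le_real.2 (hP.eigenvalues_nonneg i)) hform

lemma smul_posSemidef {N : ℕ} {C : Matrix (Fin N) (Fin N) ℂ} (hC : C.PosSemidef)
    {lam : ℝ} (hlam : 0 ≤ lam) : (((lam : ℝ) : ℂ) • C).PosSemidef := by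
  refine Matrix.PosSemidef.of_dotProduct_mulVec_nonneg ?_ ?_
  · show (((lam : ℝ) : ℂ) • C)ᴴ = _
    rw [Matrix.conjTranspose_smul, hC.1.eq]
    congr 1
    simp [RCLike.star_def, Complex.conj_ofReal]
  · intro y
    rw [Matrix.smul_mulVec, dotProduct_smul, smul_eq_mul]
    exact mul_nonneg (Complex.zero_le_real.2 hlam) (hC.dotProduct_mulVec_nonneg y)

lemma sum_real_coe {N : ℕ} (x : Fin N → ℂ) (F : Fin N → Fin N → ℝ)
    (hF : ∀ s t, F t s = F s t) :
    (∑ s, ∑ t, conj' (x s) * ((F s t : ℝ) : ℂ) * x t)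
      = (((∑ s, ∑ t, (conj' (x s) * x t).re * F s t : ℝ)) : ℂ) := by
  apply Complex.ext
  · rw [Complex.ofReal_re, Complex.re_sum]
    refine Finset.sum_congr rfl fun s _ => ?_
    rw [Complex.re_sum]
    refine Finset.sum_congr rfl fun t _ => ?_
    simp [Complex.mul_re, Complex.mul_im]
    ring
  · rw [Complex.ofReal_im]
    have hterm : ∀ s t, (conj' (x s) * ((F s t : ℝ):ℂ) * x t).im
        = F s t * (conj' (x s) * x t).im := by
      intro s t
      simp [Complex.mul_im, Complex.mul_re]
      ring
    have hinner : ∀ s, (∑ t, conj' (x s) * ((F s t : ℝ):ℂ) * x t).im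
        = ∑ t, F s t * (conj' (x s) * x t).im := by
      intro s
      rw [Complex.im_sum]
      exact Finset.sum_congr rfl fun t _ => hterm s t
    rw [Complex.im_sum, Finset.sum_congr rfl fun s (_ : s ∈ Finset.univ) => hinner s]
    have hanti : ∀ s t : Fin N, F t s * (conj' (x t) * x s).im
        = -(F s t * (conj' (x s) * x t).im) := by
      intro s t
      rw [hF]
      have him : (conj' (x t) * x s).im = -((conj' (x s) * x t).im) := by
        simp [Complex.mul_im]
        ring
      rw [him]
      ring
    have hdouble : (∑ s, ∑ t, F s t * (conj' (x s) * x t).im)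
        = -∑ s, ∑ t, F s t * (conj' (x s) * x t).im := by
      conv_lhs => rw [Finset.sum_comm]
      rw [← Finset.sum_neg_distrib]
      refine Finset.sum_congr rfl fun s _ => ?_
      rw [← Finset.sum_neg_distrib]
      exact Finset.sum_congr rfl fun t _ => hanti s t
    linarith [hdouble]

end Helpers

/-- Proposition: if the entrywise map `Ψ_{α-1,1}` preserves positivity on
`(n-1) × (n-1)` Hermitian positive semidefinite matrices, then the entrywise map
`Ψ_{α,0}` preserves positivity on `n × n` Hermitian positive semidefinite matrices. -/
theorem Psi_induction_step (n : ℕ) (hn : 3 ≤ n) (α : ℝ) (hα : 1 < α)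
    (h : ∀ A : Matrix (Fin (n - 1)) (Fin (n - 1)) ℂ, A.PosSemidef →
      (A.map (Psi (α - 1) 1)).PosSemidef) :
    ∀ A : Matrix (Fin n) (Fin n) ℂ, A.PosSemidef → (A.map (Psi α 0)).PosSemidef := by
  obtain ⟨m, rfl⟩ : ∃ m, n = m + 1 := ⟨n - 1, by omega⟩
  try simp only [Nat.add_sub_cancel] at h
  intro A hA
  have hα0 : (0:ℝ) < α := by linarith
  set e : Fin (m + 1) := Fin.last m with he
  obtain ⟨ξ, hCpsd, hrow, hcol⟩ := psd_outer_decomp hA e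
  set Cm : Matrix (Fin (m+1)) (Fin (m+1)) ℂ :=
    A - Matrix.of (fun s t => ξ s * (starRingEnd ℂ) (ξ t)) with hCm
  have hCrow : ∀ t, Cm e t = 0 := fun t => by
    simp only [hCm, Matrix.sub_apply, Matrix.of_apply]
    rw [hrow t]; ring
  have hCcol : ∀ s, Cm s e = 0 := fun s => by
    simp only [hCm, Matrix.sub_apply, Matrix.of_apply]
    rw [hcol s]; ring
  set zf : ℝ → Fin (m+1) → Fin (m+1) → ℂ :=
    fun lam s t => ξ s * (starRingEnd ℂ) (ξ t) + (lam : ℂ) * Cm s t with hzf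
  have hz1 : ∀ s t, zf 1 s t = A s t := by
    intro s t
    simp only [hzf, hCm, Matrix.sub_apply, Matrix.of_apply]
    push_cast
    ring
  have habs_symm : ∀ s t, ‖(A t s)‖ ^ α = ‖(A s t)‖ ^ α := by
    intro s t
    rw [← hA.1.apply s t, RCLike.star_def, Complex.norm_conj]
  refine Matrix.PosSemidef.of_dotProduct_mulVec_nonneg ?_ ?_
  · -- Hermitian
    ext s t
    rw [Matrix.conjTranspose_apply, Matrix.map_apply, Matrix.map_apply,
      psi_zero_right α hα0, psi_zero_right α hα0, RCLike.star_def, Complex.conj_ofReal]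
    exact_mod_cast habs_symm s t
  · intro x
    rw [quadform_eq]
    set H : ℝ → ℝ := fun lam => ∑ s, ∑ t,
      ((starRingEnd ℂ) (x s) * x t).re * ‖(zf lam s t)‖ ^ α with hH
    have hS : (∑ s, ∑ t, (starRingEnd ℂ) (x s) * (A.map (Psi α 0)) s t * x t)
        = ((H 1 : ℝ) : ℂ) := by
      have h1 : ∀ s t : Fin (m+1), (starRingEnd ℂ) (x s) * (A.map (Psi α 0)) s t * x t
          = (starRingEnd ℂ) (x s) * ((‖(zf 1 s t)‖ ^ α : ℝ) : ℂ) * x t := by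
        intro s t
        rw [Matrix.map_apply, psi_zero_right α hα0, hz1]
      rw [Finset.sum_congr rfl fun s (_ : s ∈ Finset.univ) =>
        Finset.sum_congr rfl fun t _ => h1 s t]
      rw [sum_real_coe x (fun s t => ‖(zf 1 s t)‖ ^ α)
        (fun s t => by beta_reduce; rw [hz1, hz1]; exact habs_symm s t)]
    rw [hS]
    refine Complex.zero_le_real.2 ?_
    have hderiv : ∀ lam : ℝ, HasDerivAt H
        (∑ s, ∑ t, ((starRingEnd ℂ) (x s) * x t).re *
          (α * ((starRingEnd ℂ) (Psi (α - 1) 1 (zf lam s t)) * Cm s t).re)) lam := by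
      intro lam
      rw [hH]
      apply HasDerivAt.fun_sum
      intro s _
      apply HasDerivAt.fun_sum
      intro t _
      have hk := (hasDerivAt_key hα (ξ s * (starRingEnd ℂ) (ξ t)) (Cm s t) lam).const_mul
        (((starRingEnd ℂ) (x s) * x t).re)
      simpa [hzf] using hk
    -- H 0 is nonnegative
    have hH0 : 0 ≤ H 0 := by
      have hzero : ∀ s t : Fin (m+1), ‖(zf 0 s t)‖ ^ α
          = (‖(ξ s)‖ ^ α) * (‖(ξ t)‖ ^ α) := by
        intro s t
        have : zf 0 s t = ξ s * (starRingEnd ℂ) (ξ t) := by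
          simp [hzf]
        rw [this, norm_mul, Complex.norm_conj,
          Real.mul_rpow (norm_nonneg _) (norm_nonneg _)]
      have hH0eq : H 0 = (((starRingEnd ℂ) (∑ t, x t * ((‖(ξ t)‖ ^ α : ℝ) : ℂ)))
          * (∑ t, x t * ((‖(ξ t)‖ ^ α : ℝ) : ℂ))).re := by
        rw [hH]
        have hconjw : (starRingEnd ℂ) (∑ t, x t * ((‖(ξ t)‖ ^ α : ℝ) : ℂ))
            = ∑ s, (starRingEnd ℂ) (x s) * ((‖(ξ s)‖ ^ α : ℝ) : ℂ) := by
          rw [map_sum]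
          refine Finset.sum_congr rfl fun s _ => ?_
          rw [_root_.map_mul, Complex.conj_ofReal]
        rw [hconjw, Finset.sum_mul_sum, Complex.re_sum]
        refine Finset.sum_congr rfl fun s _ => ?_
        rw [Complex.re_sum]
        refine Finset.sum_congr rfl fun t _ => ?_
        rw [hzero s t]
        simp [Complex.mul_re, Complex.mul_im]
        ring
      rw [hH0eq, ← Complex.normSq_eq_conj_mul_self, Complex.ofReal_re]
      exact Complex.normSq_nonneg _
    -- monotonicity
    have hcont : Continuous H := continuous_iff_continuousAt.2 fun lam => (hderiv lam).continuousAt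
    have hdiff : Differentiable ℝ H := fun lam => (hderiv lam).differentiableAt
    have hDnonneg : ∀ lam ∈ interior (Set.Icc (0:ℝ) 1), 0 ≤ deriv H lam := by
      rw [interior_Icc]
      intro lam hlam
      rw [(hderiv lam).deriv]
      -- the Schur-product positivity argument
      set B : Matrix (Fin (m+1)) (Fin (m+1)) ℂ :=
        (Matrix.of fun s t => ξ s * (starRingEnd ℂ) (ξ t)) + ((lam : ℝ) : ℂ) • Cm with hB
      have hBentry : ∀ s t, B s t = zf lam s t := by
        intro s t
        simp [hB, hzf, Matrix.add_apply, Matrix.smul_apply, smul_eq_mul]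
      have hBpsd : B.PosSemidef := (outer_posSemidef ξ).add (smul_posSemidef hCpsd hlam.1.le)
      set W : Matrix (Fin (m+1)) (Fin (m+1)) ℂ :=
        Matrix.of (fun s t => (starRingEnd ℂ) (Psi (α-1) 1 (B s t)) * Cm s t) with hW
      have hWrow : ∀ t, W e t = 0 := fun t => by
        simp only [hW, Matrix.of_apply, hCrow t, mul_zero]
      have hWcol : ∀ s, W s e = 0 := fun s => by
        simp only [hW, Matrix.of_apply, hCcol s, mul_zero]
      have hsubP : ((B.submatrix Fin.castSucc Fin.castSucc).map (Psi (α-1) 1)).PosSemidef :=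
        h _ (hBpsd.submatrix _)
      have hconjP := conj_posSemidef hsubP
      have hCsub : (Cm.submatrix Fin.castSucc Fin.castSucc).PosSemidef := hCpsd.submatrix _
      have hW' := schur_hadamard hconjP hCsub
      have hquadW : ∀ y : Fin (m+1) → ℂ,
          0 ≤ (∑ s, ∑ t, (starRingEnd ℂ) (y s) * W s t * y t).re := by
        intro y
        have hinner : ∀ s, (∑ t, (starRingEnd ℂ) (y s) * W s t * y t)
            = ∑ j : Fin m, (starRingEnd ℂ) (y s) * W s (Fin.castSucc j) * y (Fin.castSucc j) := by
          intro s
          rw [Fin.sum_univ_castSucc, ← he, hWcol s, mul_zero, zero_mul, add_zero]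
        have hlast : (∑ t, (starRingEnd ℂ) (y e) * W e t * y t) = 0 :=
          Finset.sum_eq_zero fun t _ => by rw [hWrow t, mul_zero, zero_mul]
        have hsplit : (∑ s, ∑ t, (starRingEnd ℂ) (y s) * W s t * y t)
            = ∑ i : Fin m, ∑ j : Fin m, (starRingEnd ℂ) (y (Fin.castSucc i))
                * W (Fin.castSucc i) (Fin.castSucc j) * y (Fin.castSucc j) := by
          rw [Fin.sum_univ_castSucc, ← he, hlast, add_zero]
          exact Finset.sum_congr rfl fun i _ => hinner _
        rw [hsplit]
        have hform := psd_re_nonneg hW' (fun i => y (Fin.castSucc i))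
        rw [quadform_eq] at hform
        have hentries : ∀ i j : Fin m,
            (starRingEnd ℂ) (y (Fin.castSucc i)) * W (Fin.castSucc i) (Fin.castSucc j)
              * y (Fin.castSucc j)
            = (starRingEnd ℂ) (y (Fin.castSucc i)) *
              (Matrix.of fun s t =>
                (Matrix.of fun s t => (starRingEnd ℂ)
                  (((B.submatrix Fin.castSucc Fin.castSucc).map (Psi (α-1) 1)) s t)) s t *
                (Cm.submatrix Fin.castSucc Fin.castSucc) s t) i j * y (Fin.castSucc j) := by
          intro i j
          simp [hW, Matrix.submatrix_apply, Matrix.map_apply]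
        rw [Finset.sum_congr rfl fun i (_ : i ∈ Finset.univ) =>
          Finset.sum_congr rfl fun j _ => hentries i j]
        exact hform
      set x' : Fin (m+1) → ℂ := fun s => (starRingEnd ℂ) (x s) with hx'
      have hterm : ∀ s t, ((starRingEnd ℂ) (x s) * x t).re *
            (α * ((starRingEnd ℂ) (Psi (α-1) 1 (zf lam s t)) * Cm s t).re)
          = (α/2) * (((starRingEnd ℂ) (x s) * W s t * x t).re
              + ((starRingEnd ℂ) (x' s) * W s t * x' t).re) := by
        intro s t
        have hw : W s t = (starRingEnd ℂ) (Psi (α-1) 1 (zf lam s t)) * Cm s t := by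
          rw [hW, Matrix.of_apply, hBentry]
        rw [hw, hx']
        simp only [Complex.mul_re, Complex.mul_im, Complex.conj_re, Complex.conj_im,
          Complex.conj_conj]
        ring
      rw [Finset.sum_congr rfl fun s (_ : s ∈ Finset.univ) =>
        Finset.sum_congr rfl fun t _ => hterm s t]
      have hsplit2 : (∑ s, ∑ t, (α/2) * (((starRingEnd ℂ) (x s) * W s t * x t).re
            + ((starRingEnd ℂ) (x' s) * W s t * x' t).re))
          = (α/2) * ((∑ s, ∑ t, (starRingEnd ℂ) (x s) * W s t * x t).re
            + (∑ s, ∑ t, (starRingEnd ℂ) (x' s) * W s t * x' t).re) := by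
        rw [Complex.re_sum, Complex.re_sum, ← Finset.sum_add_distrib, Finset.mul_sum]
        refine Finset.sum_congr rfl fun s _ => ?_
        rw [Complex.re_sum, Complex.re_sum, ← Finset.sum_add_distrib, Finset.mul_sum]
      rw [hsplit2]
      exact mul_nonneg (by linarith) (add_nonneg (hquadW x) (hquadW x'))
    have hmono := monotoneOn_of_deriv_nonneg (convex_Icc (0:ℝ) 1) hcont.continuousOn
      hdiff.differentiableOn hDnonneg
    have := hmono (Set.left_mem_Icc.mpr zero_le_one) (Set.right_mem_Icc.mpr zero_le_one)
      zero_le_one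
    linarith
end
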